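/- arXiv:2604.01744 — 4 statements merged into one kernel-verified Lean document; each statement's English description precedes it below -/
import Mathlib

section
/- Let {P_{j,m}(ε,t,A)} be a secular-coefficient family with renormalized amplitudes 𝒜_j(ε,t,A) = P_{j,m_j}(ε,t,A). Then the renormalized amplitudes satisfy the RG equation ∂_t 𝒜_j(ε,t,A) = [∂_s P_{j,m_j}(ε, s, 𝒜(ε,t,A))] evaluated at s = 0, for all 1 ≤ j ≤ n, as an identity in ℂ[t,A][[ε]] (here ∂_t and ∂_s act coefficientwise on the polynomial coefficients). Moreover both sides are divisible by ε, i.e. the RG dynamics is slow. -/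
noncomputable section

open Polynomial

/-- Finite `R`-linear combinations of Fourier modes `e^{i m t}` (`m : ℤ`):
the mode-`m` coefficient of `x` is `x m : R`. -/
abbrev ModeRing (R : Type) [CommRing R] : Type := AddMonoidAlgebra R ℤ

/-- Formal power series in `ε` whose coefficients are finite Fourier sums with
coefficients in `R`. -/
abbrev EpsSeries (R : Type) [CommRing R] : Type := PowerSeries (ModeRing R)

/-- The mode `e^{i t}`, as a unit of `EpsSeries R` (inverse `e^{-i t}`). -/
def zUnit (R : Type) [CommRing R] : (EpsSeries R)ˣ where
  val := PowerSeries.C (AddMonoidAlgebra.single 1 1)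
  inv := PowerSeries.C (AddMonoidAlgebra.single (-1) 1)
  val_inv := by
    rw [← map_mul, AddMonoidAlgebra.single_mul_single]
    norm_num [AddMonoidAlgebra.one_def]
  inv_val := by
    rw [← map_mul, AddMonoidAlgebra.single_mul_single]
    norm_num [AddMonoidAlgebra.one_def]

/-- Evaluation of a Laurent polynomial in `z` (an element of `ℂ[z,z⁻¹] = AddMonoidAlgebra ℂ ℤ`)
at `z = e^{i t}`, landing in `EpsSeries R`. -/
def zEval (R : Type) [CommRing R] [Algebra ℂ R] : AddMonoidAlgebra ℂ ℤ →+* EpsSeries R :=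
  AddMonoidAlgebra.liftNCRingHom
    ((PowerSeries.C (R := ModeRing R)).comp (AddMonoidAlgebra.singleZeroRingHom.comp (algebraMap ℂ R)))
    ((Units.coeHom _).comp (zpowersHom _ (zUnit R)))
    (fun _ _ => Commute.all _ _)

/-- Evaluation of `V ∈ ℂ[ε, z, z⁻¹, y₁, …, yₙ]` (encoded as a polynomial in the `y`-variables
with coefficients in `ℂ[z,z⁻¹][ε]`) at `z = e^{i t}`, `ε = ε` (the power series variable)
and given formal series values of the `y`-variables. -/
def VEval {n : ℕ} (R : Type) [CommRing R] [Algebra ℂ R]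
    (V : MvPolynomial (Fin n) (Polynomial (AddMonoidAlgebra ℂ ℤ)))
    (y : Fin n → EpsSeries R) : EpsSeries R :=
  MvPolynomial.eval₂ (Polynomial.eval₂RingHom (zEval R) PowerSeries.X) y V

/-- The polynomial ring `ℂ[t, A₁, …, Aₙ]`: the variable `none` is `t`, `some i` is `Aᵢ`. -/
abbrev AmpRing (n : ℕ) : Type := MvPolynomial (Option (Fin n)) ℂ

/-- The secular coefficient `P_{j,m}(ε,t,A) ∈ ℂ[t,A][[ε]]` of a family
`Q j = Σ_k ε^k Σ_m P_{j,m}^{(k)} e^{imt}`. -/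
def Pc {n : ℕ} (Q : Fin n → EpsSeries (AmpRing n)) (j : Fin n) (m : ℤ) :
    PowerSeries (AmpRing n) :=
  PowerSeries.mk fun k => (PowerSeries.coeff (R := ModeRing (AmpRing n)) k (Q j)).coeff m

/-- A secular-coefficient family for the system `dy_j/dt = i m_j y_j + ε V_j(ε,e^{±it},y)`:
(a) at each `ε`-order only finitely many modes are nonzero (built into `ModeRing`);
(b) the `ε⁰`-coefficient of `P_{j,m}` is `A_j δ_{m,m_j}`;
(c) for `k ≥ 1` the `ε^k`-coefficient of the resonant `P_{j,m_j}` vanishes at `t = 0`;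
(d) the differential equation holds order by order in `ε` and mode by mode in `e^{imt}`:
`∂_t P_{j,m} + i(m-m_j) P_{j,m} = [ε V_j(ε, e^{±it}, Σ_l P_{·,l} e^{ilt})]_{e^{imt}}`. -/
structure IsSecularFamily {n : ℕ} (mvec : Fin n → ℤ)
    (V : Fin n → MvPolynomial (Fin n) (Polynomial (AddMonoidAlgebra ℂ ℤ)))
    (Q : Fin n → EpsSeries (AmpRing n)) : Prop where
  coeff_zero : ∀ j, PowerSeries.coeff (R := ModeRing (AmpRing n)) 0 (Q j)
      = AddMonoidAlgebra.single (mvec j) (MvPolynomial.X (some j))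
  resonant_vanish : ∀ (j : Fin n) (k : ℕ), 1 ≤ k →
    MvPolynomial.aeval
      (fun v : Option (Fin n) => Option.elim v (0 : AmpRing n) (fun i => MvPolynomial.X (some i)))
      ((PowerSeries.coeff (R := ModeRing (AmpRing n)) k (Q j)).coeff (mvec j)) = 0
  ode : ∀ (j : Fin n) (m : ℤ),
    (PowerSeries.mk fun k =>
        MvPolynomial.pderiv none ((PowerSeries.coeff (R := ModeRing (AmpRing n)) k (Q j)).coeff m))
      + PowerSeries.C (MvPolynomial.C (Complex.I * ((m : ℂ) - (mvec j : ℂ)))) * Pc Q j m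
      = PowerSeries.mk fun k =>
          (PowerSeries.coeff (R := ModeRing (AmpRing n)) k
            (PowerSeries.X * VEval (AmpRing n) (V j) Q)).coeff m

/-- The polynomial ring `ℂ[t, s, A₁, …, Aₙ]`: `none` is `t`, `some none` is `s`,
`some (some i)` is `Aᵢ`. -/
abbrev AmpRing2 (n : ℕ) : Type := MvPolynomial (Option (Option (Fin n))) ℂ

/-- The inclusion `ℂ[t,A] → ℂ[t,s,A]`. -/
def embedTA {n : ℕ} : AmpRing n →+* AmpRing2 n :=
  (MvPolynomial.rename (Option.map (some : Fin n → Option (Fin n)))).toRingHom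

/-- The map `ℂ[t,A] → ℂ[t,s,A]` renaming `t` to `s`. -/
def renameTS {n : ℕ} : AmpRing n →+* AmpRing2 n :=
  (MvPolynomial.rename
    (fun v : Option (Fin n) => Option.elim v (some none) (fun i => some (some i)))).toRingHom

/-- Substitution of power series (with nontrivial `ε⁰`-part) for the coefficient variables of a
power series: `(substSeries φ p) = Σ_k ε^k · φ(coeff_k p)`; at each `ε`-order this is a finite
sum. -/
def substSeries {R R' : Type} [CommRing R] [CommRing R'] (φ : R →+* PowerSeries R')
    (p : PowerSeries R) : PowerSeries R' :=
  PowerSeries.mk fun K => ∑ k ∈ Finset.range (K + 1),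
    PowerSeries.coeff (R := R') (K - k) (φ (PowerSeries.coeff (R := R) k p))

/-- The renormalized amplitude `𝒜_i(ε,s,A) = P_{i,m_i}(ε,s,A)`, as an element of
`ℂ[t,s,A][[ε]]` (the `t`-variable of `P` renamed to `s`). -/
def renAmpS {n : ℕ} (mvec : Fin n → ℤ) (Q : Fin n → EpsSeries (AmpRing n)) (i : Fin n) :
    PowerSeries (AmpRing2 n) :=
  PowerSeries.map renameTS (Pc Q i (mvec i))

/-- The substitution `t ↦ t - s`, `A_i ↦ 𝒜_i(ε,s,A)`, as a ring map
`ℂ[t,A] → ℂ[t,s,A][[ε]]`. -/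
def substTA {n : ℕ} (mvec : Fin n → ℤ) (Q : Fin n → EpsSeries (AmpRing n)) :
    AmpRing n →+* PowerSeries (AmpRing2 n) :=
  MvPolynomial.eval₂Hom ((PowerSeries.C (R := AmpRing2 n)).comp MvPolynomial.C)
    (fun v : Option (Fin n) => Option.elim v
      (PowerSeries.C (MvPolynomial.X none - MvPolynomial.X (some none)))
      (fun i => renAmpS mvec Q i))

/-- Coefficientwise `∂_t` on `ℂ[t,A][[ε]]`. -/
def dT {n : ℕ} (p : PowerSeries (AmpRing n)) : PowerSeries (AmpRing n) :=
  PowerSeries.mk fun k => MvPolynomial.pderiv none (PowerSeries.coeff (R := AmpRing n) k p)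

/-- Coefficientwise `∂_s` on `ℂ[t,s,A][[ε]]`. -/
def dS {n : ℕ} (p : PowerSeries (AmpRing2 n)) : PowerSeries (AmpRing2 n) :=
  PowerSeries.mk fun k => MvPolynomial.pderiv (some none) (PowerSeries.coeff (R := AmpRing2 n) k p)

/-- Evaluation `s := 0`, a ring map `ℂ[t,s,A] → ℂ[t,A]`. -/
def evalS0 {n : ℕ} : AmpRing2 n →+* AmpRing n :=
  MvPolynomial.eval₂Hom MvPolynomial.C
    (fun v : Option (Option (Fin n)) => Option.elim v (MvPolynomial.X none)
      (fun w => Option.elim w 0 (fun i => MvPolynomial.X (some i))))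

/-- The substitution `t ↦ s`, `A_i ↦ 𝒜_i(ε,t,A)`, as a ring map `ℂ[t,A] → ℂ[t,s,A][[ε]]`. -/
def substSA {n : ℕ} (mvec : Fin n → ℤ) (Q : Fin n → EpsSeries (AmpRing n)) :
    AmpRing n →+* PowerSeries (AmpRing2 n) :=
  MvPolynomial.eval₂Hom ((PowerSeries.C (R := AmpRing2 n)).comp MvPolynomial.C)
    (fun v : Option (Fin n) => Option.elim v
      (PowerSeries.C (MvPolynomial.X (some none)))
      (fun i => PowerSeries.map embedTA (Pc Q i (mvec i))))
section SubstSeriesHom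

variable {R R' : Type} [CommRing R] [CommRing R']

lemma substSeries_coeff (φ : R →+* PowerSeries R') (p : PowerSeries R) (K : ℕ) :
    PowerSeries.coeff (R := R') K (substSeries φ p)
      = ∑ k ∈ Finset.range (K + 1),
          PowerSeries.coeff (R := R') (K - k) (φ (PowerSeries.coeff (R := R) k p)) := by
  simp [substSeries]

/-- Low coefficients of `substSeries φ p` agree with evaluation of a truncation. -/
lemma substSeries_coeff_eq_trunc (φ : R →+* PowerSeries R') (p : PowerSeries R) {x K : ℕ}
    (hx : x ≤ K) :
    PowerSeries.coeff (R := R') x (substSeries φ p)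
      = PowerSeries.coeff (R := R') x
          (Polynomial.eval₂ φ PowerSeries.X (PowerSeries.trunc (K + 1) p)) := by
  rw [Polynomial.eval₂_eq_sum_range' φ (PowerSeries.natDegree_trunc_lt p K) PowerSeries.X,
    map_sum, substSeries_coeff]
  have h1 : ∀ i ∈ Finset.range (K + 1),
      PowerSeries.coeff (R := R') x (φ ((PowerSeries.trunc (K+1) p).coeff i) * PowerSeries.X ^ i)
        = if i ≤ x then PowerSeries.coeff (R := R') (x - i) (φ (PowerSeries.coeff (R := R) i p)) else 0 := by
    intro i hi
    rw [PowerSeries.coeff_trunc, if_pos (Finset.mem_range.mp hi),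
      PowerSeries.coeff_mul_X_pow']
  rw [Finset.sum_congr rfl h1, Finset.sum_ite, Finset.sum_const_zero, add_zero]
  apply Finset.sum_congr _ (fun _ _ => rfl)
  ext i
  simp only [Finset.mem_filter, Finset.mem_range, Nat.lt_succ_iff]
  omega

lemma coeff_eval₂_eq_zero_of_low (φ : R →+* PowerSeries R') {H : Polynomial R} {K : ℕ}
    (h : ∀ i ≤ K, H.coeff i = 0) :
    PowerSeries.coeff (R := R') K (Polynomial.eval₂ φ PowerSeries.X H) = 0 := by
  rw [Polynomial.eval₂_eq_sum_range, map_sum]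
  apply Finset.sum_eq_zero
  intro i _
  rw [PowerSeries.coeff_mul_X_pow']
  by_cases hi : i ≤ K
  · rw [if_pos hi, h i hi, map_zero, map_zero]
  · rw [if_neg hi]

lemma substSeries_coe_coeff (φ : R →+* PowerSeries R') (G : Polynomial R) (K : ℕ) :
    PowerSeries.coeff (R := R') K (substSeries φ (G : PowerSeries R))
      = PowerSeries.coeff (R := R') K (Polynomial.eval₂ φ PowerSeries.X G) := by
  rw [substSeries_coeff_eq_trunc φ _ (le_refl K)]
  have hdecomp : G = PowerSeries.trunc (K + 1) (G : PowerSeries R)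
      + (G - PowerSeries.trunc (K + 1) (G : PowerSeries R)) := by ring
  conv_rhs => rw [hdecomp]
  rw [Polynomial.eval₂_add, map_add, left_eq_add]
  apply coeff_eval₂_eq_zero_of_low
  intro i hi
  rw [Polynomial.coeff_sub, PowerSeries.coeff_trunc, if_pos (Nat.lt_succ_of_le hi),
    Polynomial.coeff_coe, sub_self]

lemma substSeries_add (φ : R →+* PowerSeries R') (p q : PowerSeries R) :
    substSeries φ (p + q) = substSeries φ p + substSeries φ q := by
  ext K
  simp [substSeries_coeff, Finset.sum_add_distrib]

lemma substSeries_mul (φ : R →+* PowerSeries R') (p q : PowerSeries R) :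
    substSeries φ (p * q) = substSeries φ p * substSeries φ q := by
  ext K
  rw [substSeries_coeff_eq_trunc φ (p * q) (le_refl K),
    ← PowerSeries.trunc_trunc_mul_trunc]
  have h2 : PowerSeries.coeff (R := R') K (Polynomial.eval₂ φ PowerSeries.X
      (PowerSeries.trunc (K+1) ((PowerSeries.trunc (K+1) p : PowerSeries R)
        * (PowerSeries.trunc (K+1) q : PowerSeries R))))
      = PowerSeries.coeff (R := R') K (Polynomial.eval₂ φ PowerSeries.X
          (PowerSeries.trunc (K+1) p * PowerSeries.trunc (K+1) q)) := by
    rw [← substSeries_coeff_eq_trunc φ _ (le_refl K), ← Polynomial.coe_mul,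
      substSeries_coe_coeff]
  rw [h2, Polynomial.eval₂_mul, PowerSeries.coeff_mul, PowerSeries.coeff_mul]
  apply Finset.sum_congr rfl
  intro xy hxy
  rw [Finset.HasAntidiagonal.mem_antidiagonal] at hxy
  rw [substSeries_coeff_eq_trunc φ p (show xy.1 ≤ K by omega),
    substSeries_coeff_eq_trunc φ q (show xy.2 ≤ K by omega)]

lemma substSeries_one (φ : R →+* PowerSeries R') : substSeries φ 1 = 1 := by
  ext K
  rw [substSeries_coeff]
  rw [Finset.sum_eq_single 0]
  · simp [PowerSeries.coeff_one]
  · intro k hk hk0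
    rw [PowerSeries.coeff_one, if_neg hk0, map_zero, map_zero]
  · simp

/-- `substSeries φ` as a ring homomorphism. -/
def ssHom (φ : R →+* PowerSeries R') : PowerSeries R →+* PowerSeries R' where
  toFun := substSeries φ
  map_one' := substSeries_one φ
  map_mul' := substSeries_mul φ
  map_zero' := by ext K; simp [substSeries_coeff]
  map_add' := substSeries_add φ

lemma ssHom_apply (φ : R →+* PowerSeries R') (p : PowerSeries R) :
    ssHom φ p = substSeries φ p := rfl

lemma substSeries_C (φ : R →+* PowerSeries R') (x : R) :
    substSeries φ (PowerSeries.C (R := R) x) = φ x := by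
  ext K
  rw [substSeries_coeff, Finset.sum_eq_single 0]
  · simp
  · intro k hk hk0
    rw [PowerSeries.coeff_C, if_neg hk0, map_zero, map_zero]
  · simp

lemma substSeries_X (φ : R →+* PowerSeries R') :
    substSeries φ (PowerSeries.X) = PowerSeries.X := by
  ext K
  rw [substSeries_coeff]
  rcases Nat.eq_zero_or_pos K with hK | hK
  · subst hK
    simp [PowerSeries.coeff_X]
  · rw [Finset.sum_eq_single 1]
    · rw [PowerSeries.coeff_X, if_pos rfl, map_one, PowerSeries.coeff_one,
        PowerSeries.coeff_X]
      rcases Nat.eq_or_lt_of_le hK with h1 | h1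
      · rw [← h1]; simp
      · rw [if_neg (by omega), if_neg (by omega)]
    · intro k hk hk1
      rw [PowerSeries.coeff_X, if_neg hk1, map_zero, map_zero]
    · intro h1
      exfalso; exact h1 (Finset.mem_range.mpr (by omega))

end SubstSeriesHom
section EpsHom

variable {R S : Type} [CommRing R] [CommRing S]

/-- Extension of a coefficient substitution `ψ : R →+* S[[ε]]` to the mode ring. -/
def modeHom (ψ : R →+* PowerSeries S) : ModeRing R →+* PowerSeries (ModeRing S) :=
  AddMonoidAlgebra.liftNCRingHom
    ((PowerSeries.map (AddMonoidAlgebra.singleZeroRingHom :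
        S →+* ModeRing S)).comp ψ)
    (((PowerSeries.C (R := ModeRing S)).toMonoidHom).comp (AddMonoidAlgebra.of S ℤ))
    (fun _ _ => Commute.all _ _)

lemma modeHom_single (ψ : R →+* PowerSeries S) (m : ℤ) (r : R) :
    modeHom ψ (AddMonoidAlgebra.single m r)
      = PowerSeries.map (AddMonoidAlgebra.singleZeroRingHom : S →+* ModeRing S) (ψ r)
        * PowerSeries.C (AddMonoidAlgebra.single m 1) := by
  simp only [modeHom, AddMonoidAlgebra.liftNCRingHom]
  erw [AddMonoidAlgebra.liftNC_single]
  rfl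

lemma modeHom_coeff_apply (ψ : R →+* PowerSeries S) (f : ModeRing R) (j : ℕ) (m : ℤ) :
    (PowerSeries.coeff (R := (ModeRing S)) j (modeHom ψ f)).coeff m
      = PowerSeries.coeff (R := S) j (ψ (f.coeff m)) := by
  induction f using AddMonoidAlgebra.induction_linear with
  | zero => simp
  | add f g hf hg =>
      rw [map_add, map_add]
      conv_rhs => rw [show ((f + g) : ModeRing R).coeff m = f.coeff m + g.coeff m from rfl,
        map_add, map_add]
      rw [AddMonoidAlgebra.coeff_add, Finsupp.add_apply, hf, hg]
  | single m' r =>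
      rw [modeHom_single, PowerSeries.coeff_mul_C, PowerSeries.coeff_map]
      change (AddMonoidAlgebra.single (0:ℤ) (PowerSeries.coeff (R := S) j (ψ r))
          * AddMonoidAlgebra.single m' (1:S)).coeff m = _
      rw [AddMonoidAlgebra.single_mul_single, zero_add, mul_one]
      rw [AddMonoidAlgebra.coeff_single, AddMonoidAlgebra.coeff_single,
        Finsupp.single_apply, Finsupp.single_apply]
      split_ifs with h
      · rfl
      · rw [map_zero, map_zero]

/-- The coefficient-substitution ring homomorphism on `EpsSeries`. -/
def epsHom (ψ : R →+* PowerSeries S) : EpsSeries R →+* EpsSeries S :=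
  ssHom (modeHom ψ)

lemma epsHom_coeff_apply (ψ : R →+* PowerSeries S) (q : EpsSeries R) (K : ℕ) (m : ℤ) :
    (PowerSeries.coeff (R := (ModeRing S)) K (epsHom ψ q)).coeff m
      = ∑ k ∈ Finset.range (K + 1),
          PowerSeries.coeff (R := S) (K - k) (ψ ((PowerSeries.coeff (R := (ModeRing R)) k q).coeff m)) := by
  rw [epsHom, ssHom_apply, substSeries_coeff, AddMonoidAlgebra.coeff_sum, Finsupp.finset_sum_apply]
  exact Finset.sum_congr rfl fun k _ => modeHom_coeff_apply ψ _ _ m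

lemma epsHom_C (ψ : R →+* PowerSeries S) (x : ModeRing R) :
    epsHom ψ (PowerSeries.C x) = modeHom ψ x := substSeries_C _ x

lemma epsHom_X (ψ : R →+* PowerSeries S) : epsHom ψ PowerSeries.X = PowerSeries.X :=
  substSeries_X _

variable [Algebra ℂ R] [Algebra ℂ S]

lemma epsHom_zUnit (ψ : R →+* PowerSeries S) :
    Units.map (epsHom ψ).toMonoidHom (zUnit R) = zUnit S := by
  apply Units.ext
  show epsHom ψ (zUnit R).val = (zUnit S).val
  rw [show (zUnit R).val = PowerSeries.C (AddMonoidAlgebra.single (1:ℤ) (1:R)) from rfl,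
    epsHom_C, modeHom_single, map_one, map_one, one_mul]
  rfl

lemma zEval_single_zero (b : ℂ) :
    zEval R (AddMonoidAlgebra.single (0:ℤ) b)
      = PowerSeries.C (AddMonoidAlgebra.single (0:ℤ) (algebraMap ℂ R b)) := by
  simp only [zEval, AddMonoidAlgebra.liftNCRingHom]
  erw [AddMonoidAlgebra.liftNC_single]
  simp only [RingHom.coe_comp, Function.comp_apply, MonoidHom.coe_comp, MonoidHom.coe_coe,
    Units.coeHom_apply, zpowersHom_apply, toAdd_ofAdd, zpow_zero, Units.val_one, mul_one]
  rfl

lemma zEval_single_one (a : ℤ) :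
    zEval R (AddMonoidAlgebra.single a (1:ℂ)) = ((zUnit R ^ a : (EpsSeries R)ˣ) : EpsSeries R) := by
  simp only [zEval, AddMonoidAlgebra.liftNCRingHom]
  erw [AddMonoidAlgebra.liftNC_single]
  simp only [MonoidHom.coe_comp, MonoidHom.coe_coe, Function.comp_apply,
    RingHom.coe_comp, Units.coeHom_apply, zpowersHom_apply, toAdd_ofAdd,
    RingHom.toAddMonoidHom_eq_coe, AddMonoidHom.coe_coe, map_one, one_mul]

lemma epsHom_comp_zEval (ψ : R →+* PowerSeries S)
    (hψC : ∀ c : ℂ, ψ (algebraMap ℂ R c) = PowerSeries.C (R := S) (algebraMap ℂ S c)) :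
    (epsHom ψ).comp (zEval R) = zEval S := by
  apply AddMonoidAlgebra.ringHom_ext
  · intro b
    rw [RingHom.comp_apply, zEval_single_zero, zEval_single_zero, epsHom_C, modeHom_single,
      hψC, PowerSeries.map_C, ← AddMonoidAlgebra.one_def, map_one, mul_one]
    rfl
  · intro a
    rw [RingHom.comp_apply, zEval_single_one, zEval_single_one]
    have h1 : (epsHom ψ) ((zUnit R ^ a : (EpsSeries R)ˣ) : EpsSeries R)
        = ((Units.map (epsHom ψ).toMonoidHom (zUnit R ^ a) : (EpsSeries S)ˣ) : EpsSeries S) := rfl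
    rw [h1, map_zpow, epsHom_zUnit]

lemma epsHom_VEval {n : ℕ} (ψ : R →+* PowerSeries S)
    (hψC : ∀ c : ℂ, ψ (algebraMap ℂ R c) = PowerSeries.C (R := S) (algebraMap ℂ S c))
    (V : MvPolynomial (Fin n) (Polynomial (AddMonoidAlgebra ℂ ℤ)))
    (y : Fin n → EpsSeries R) :
    epsHom ψ (VEval R V y) = VEval S V (fun l => epsHom ψ (y l)) := by
  rw [VEval, MvPolynomial.eval₂_comp_left (epsHom ψ)]
  have h1 : (epsHom ψ).comp (Polynomial.eval₂RingHom (zEval R) PowerSeries.X)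
      = Polynomial.eval₂RingHom (zEval S) PowerSeries.X := by
    apply RingHom.ext
    intro q
    rw [RingHom.comp_apply, Polynomial.coe_eval₂RingHom, Polynomial.coe_eval₂RingHom,
      Polynomial.hom_eval₂, epsHom_comp_zEval ψ hψC, epsHom_X]
  rw [h1]
  rfl

end EpsHom
section DerivStuff

open MvPolynomial

variable {σ : Type}

/-- Coefficientwise partial derivative on power series with polynomial coefficients. -/
def pdSeries (v : σ) (q : PowerSeries (MvPolynomial σ ℂ)) : PowerSeries (MvPolynomial σ ℂ) :=
  PowerSeries.mk fun k => pderiv v (PowerSeries.coeff k q)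

lemma pdSeries_coeff (v : σ) (q : PowerSeries (MvPolynomial σ ℂ)) (k : ℕ) :
    PowerSeries.coeff k (pdSeries v q) = pderiv v (PowerSeries.coeff k q) := by
  simp [pdSeries]

lemma pdSeries_add (v : σ) (q r : PowerSeries (MvPolynomial σ ℂ)) :
    pdSeries v (q + r) = pdSeries v q + pdSeries v r := by
  ext k; simp [pdSeries_coeff]

lemma pdSeries_mul (v : σ) (q r : PowerSeries (MvPolynomial σ ℂ)) :
    pdSeries v (q * r) = pdSeries v q * r + q * pdSeries v r := by
  ext1 k
  rw [pdSeries_coeff, PowerSeries.coeff_mul, map_sum, map_add, PowerSeries.coeff_mul,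
    PowerSeries.coeff_mul, ← Finset.sum_add_distrib]
  apply Finset.sum_congr rfl
  intro xy _
  rw [pderiv_mul, pdSeries_coeff, pdSeries_coeff]

lemma pdSeries_C (v : σ) (x : MvPolynomial σ ℂ) :
    pdSeries v (PowerSeries.C x) = PowerSeries.C (pderiv v x) := by
  ext k
  rw [pdSeries_coeff, PowerSeries.coeff_C, PowerSeries.coeff_C]
  split_ifs <;> simp

lemma pdSeries_one (v : σ) : pdSeries v (1 : PowerSeries (MvPolynomial σ ℂ)) = 0 := by
  rw [show (1 : PowerSeries (MvPolynomial σ ℂ)) = PowerSeries.C 1 from rfl, pdSeries_C]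
  simp

/-- Chain rule: if a substitution sends `t` to something with `s`-derivative `1` and each `Aᵢ`
to something with `s`-derivative `0`, then `∂_s ∘ ψ = ψ ∘ ∂_t`. -/
lemma pdSeries_comp {n : ℕ} (v : σ) (ψ : AmpRing n →+* PowerSeries (MvPolynomial σ ℂ))
    (h0 : ∀ a : ℂ, pdSeries v (ψ (MvPolynomial.C a)) = 0)
    (h1 : pdSeries v (ψ (MvPolynomial.X none)) = 1)
    (h2 : ∀ i : Fin n, pdSeries v (ψ (MvPolynomial.X (some i))) = 0)
    (p : AmpRing n) :
    pdSeries v (ψ p) = ψ (pderiv none p) := by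
  induction p using MvPolynomial.induction_on with
  | C a => rw [h0 a, pderiv_C, map_zero]
  | add p q hp hq => rw [map_add, pdSeries_add, hp, hq, map_add, map_add]
  | mul_X p w hp =>
      rw [map_mul, pdSeries_mul, hp, pderiv_mul, map_add, map_mul, map_mul]
      congr 1
      cases w with
      | none => rw [pderiv_X_self, map_one, mul_one, h1, mul_one]
      | some i =>
          rw [pderiv_X_of_ne (by simp), map_zero, mul_zero, h2 i, mul_zero]

end DerivStuff
section ODEUniqueness

variable {σ : Type}

lemma mv_coeff_pderiv [DecidableEq σ] (v : σ) (p : MvPolynomial σ ℂ) (ν : σ →₀ ℕ) :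
    MvPolynomial.coeff ν (MvPolynomial.pderiv v p)
      = MvPolynomial.coeff (ν + Finsupp.single v 1) p * ((ν v : ℂ) + 1) := by
  induction p using MvPolynomial.induction_on' with
  | add p q hp hq => rw [map_add, MvPolynomial.coeff_add, MvPolynomial.coeff_add, hp, hq, add_mul]
  | monomial u a =>
      rw [MvPolynomial.pderiv_monomial, MvPolynomial.coeff_monomial, MvPolynomial.coeff_monomial]
      by_cases h : u = ν + Finsupp.single v 1
      · rw [if_pos h, if_pos (by rw [h, add_tsub_cancel_right]), h]
        have : ((ν + Finsupp.single v 1 : σ →₀ ℕ)) v = ν v + 1 := by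
          rw [Finsupp.add_apply, Finsupp.single_eq_same]
        rw [this, Nat.cast_add, Nat.cast_one]
      · rw [if_neg h]
        by_cases huv : 1 ≤ u v
        · have hne : ¬ (u - Finsupp.single v 1 = ν) := by
            intro heq
            apply h
            rw [← heq, tsub_add_cancel_of_le (Finsupp.single_le_iff.mpr huv)]
          rw [if_neg hne, zero_mul]
        · have : u v = 0 := by omega
          rw [this, Nat.cast_zero, mul_zero, zero_mul]
          split_ifs <;> rfl

/-- A polynomial eigenfunction of `∂_v` with nonzero eigenvalue is zero. -/
lemma eigen_zero [DecidableEq σ] (v : σ) (c : ℂ) (hc : c ≠ 0) (p : MvPolynomial σ ℂ)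
    (h : MvPolynomial.pderiv v p + MvPolynomial.C c * p = 0) : p = 0 := by
  have key : ∀ ν : σ →₀ ℕ,
      MvPolynomial.coeff (ν + Finsupp.single v 1) p * ((ν v : ℂ) + 1) + c * MvPolynomial.coeff ν p = 0 := by
    intro ν
    have h2 := congrArg (MvPolynomial.coeff ν) h
    rwa [MvPolynomial.coeff_add, MvPolynomial.coeff_C_mul, mv_coeff_pderiv, MvPolynomial.coeff_zero] at h2
  have bound : ∀ ν : σ →₀ ℕ, MvPolynomial.degreeOf v p < ν v → MvPolynomial.coeff ν p = 0 := by
    intro ν hν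
    by_contra hc0
    have hmem : ν ∈ p.support := MvPolynomial.mem_support_iff.mpr hc0
    have : ν v ≤ MvPolynomial.degreeOf v p := by
      rw [MvPolynomial.degreeOf_eq_sup]
      exact Finset.le_sup (f := fun m => m v) hmem
    omega
  have main : ∀ i : ℕ, ∀ ν : σ →₀ ℕ, MvPolynomial.degreeOf v p < ν v + i → MvPolynomial.coeff ν p = 0 := by
    intro i
    induction i with
    | zero => intro ν hν; exact bound ν (by omega)
    | succ i ih =>
        intro ν hν
        have h3 : MvPolynomial.coeff (ν + Finsupp.single v 1) p = 0 := by
          apply ih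
          rw [Finsupp.add_apply, Finsupp.single_eq_same]
          omega
        have h4 := key ν
        rw [h3, zero_mul, zero_add] at h4
        exact (mul_eq_zero.mp h4).resolve_left hc
  ext ν
  rw [MvPolynomial.coeff_zero]
  exact main (MvPolynomial.degreeOf v p + 1) ν (by omega)

lemma pderiv_zero_coeff [DecidableEq σ] (v : σ) (p : MvPolynomial σ ℂ)
    (h : MvPolynomial.pderiv v p = 0) : ∀ μ : σ →₀ ℕ, 1 ≤ μ v → MvPolynomial.coeff μ p = 0 := by
  intro μ hμ
  have h2 := congrArg (MvPolynomial.coeff (μ - Finsupp.single v 1)) h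
  rw [mv_coeff_pderiv, MvPolynomial.coeff_zero,
    tsub_add_cancel_of_le (Finsupp.single_le_iff.mpr hμ)] at h2
  have hne : (((μ - Finsupp.single v 1 : σ →₀ ℕ)) v : ℂ) + 1 ≠ 0 := by
    have := Nat.cast_add_one_ne_zero (R := ℂ) ((μ - Finsupp.single v 1 : σ →₀ ℕ) v)
    exact_mod_cast this
  exact (mul_eq_zero.mp h2).resolve_right hne

lemma eval₂_fix [DecidableEq σ] (v : σ) (g : σ → MvPolynomial σ ℂ)
    (hg : ∀ w, w ≠ v → g w = MvPolynomial.X w) (p : MvPolynomial σ ℂ)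
    (h : ∀ μ : σ →₀ ℕ, 1 ≤ μ v → MvPolynomial.coeff μ p = 0) :
    MvPolynomial.eval₂ MvPolynomial.C g p = p := by
  conv_lhs => rw [← MvPolynomial.support_sum_monomial_coeff p]
  conv_rhs => rw [← MvPolynomial.support_sum_monomial_coeff p]
  rw [show MvPolynomial.eval₂ MvPolynomial.C g (∑ μ ∈ p.support, MvPolynomial.monomial μ (MvPolynomial.coeff μ p))
    = MvPolynomial.eval₂Hom MvPolynomial.C g (∑ μ ∈ p.support, MvPolynomial.monomial μ (MvPolynomial.coeff μ p)) from rfl, map_sum]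
  apply Finset.sum_congr rfl
  intro μ hμ
  have hμv : μ v = 0 := by
    by_contra hv
    exact (MvPolynomial.mem_support_iff.mp hμ) (h μ (by omega))
  rw [MvPolynomial.eval₂Hom_monomial]
  have hprod : (μ.prod fun w e => g w ^ e) = μ.prod fun w e => (MvPolynomial.X w : MvPolynomial σ ℂ) ^ e := by
    apply Finset.prod_congr rfl
    intro w hw
    have : w ≠ v := by
      intro heq
      subst heq
      exact (Finsupp.mem_support_iff.mp hw) hμv
    simp only [hg w this]
  rw [hprod, ← MvPolynomial.monomial_eq]

/-- If `∂_v p = 0` and `p` vanishes under the substitution `v ↦ 0` (others fixed), `p = 0`. -/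
lemma pderiv_zero_eval_zero [DecidableEq σ] (v : σ) (p : MvPolynomial σ ℂ)
    (h : MvPolynomial.pderiv v p = 0)
    (h0 : MvPolynomial.eval₂ MvPolynomial.C (fun w => if w = v then 0 else MvPolynomial.X w) p = 0) : p = 0 := by
  rw [← eval₂_fix v (fun w => if w = v then 0 else MvPolynomial.X w) (fun w hw => if_neg hw) p
    (pderiv_zero_coeff v p h), h0]

end ODEUniqueness
section Truncation

variable {R : Type} [CommRing R] [Algebra ℂ R]

/-- Pairs of `EpsSeries` agreeing in all `ε`-coefficients up to order `N`. -/
def agreeSubring (R : Type) [CommRing R] (N : ℕ) : Subring (EpsSeries R × EpsSeries R) where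
  carrier := {x | ∀ k ≤ N, PowerSeries.coeff (R := (ModeRing R)) k x.1
    = PowerSeries.coeff (R := (ModeRing R)) k x.2}
  mul_mem' := by
    intro a b ha hb k hk
    rw [Prod.fst_mul, Prod.snd_mul, PowerSeries.coeff_mul, PowerSeries.coeff_mul]
    apply Finset.sum_congr rfl
    intro xy hxy
    rw [Finset.HasAntidiagonal.mem_antidiagonal] at hxy
    rw [ha xy.1 (by omega), hb xy.2 (by omega)]
  one_mem' := fun k _ => rfl
  add_mem' := by
    intro a b ha hb k hk
    rw [Prod.fst_add, Prod.snd_add, map_add, map_add, ha k hk, hb k hk]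
  zero_mem' := fun k _ => rfl
  neg_mem' := by
    intro a ha k hk
    rw [Prod.fst_neg, Prod.snd_neg, map_neg, map_neg, ha k hk]

lemma VEval_coeff_congr {n : ℕ} (V : MvPolynomial (Fin n) (Polynomial (AddMonoidAlgebra ℂ ℤ)))
    (y y' : Fin n → EpsSeries R) (N : ℕ)
    (h : ∀ l k, k ≤ N → PowerSeries.coeff (R := (ModeRing R)) k (y l)
      = PowerSeries.coeff (R := (ModeRing R)) k (y' l)) :
    ∀ k ≤ N, PowerSeries.coeff (R := (ModeRing R)) k (VEval R V y)
      = PowerSeries.coeff (R := (ModeRing R)) k (VEval R V y') := by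
  set f := Polynomial.eval₂RingHom (zEval R) PowerSeries.X with hf
  have hdiag : ∀ q, (f q, f q) ∈ agreeSubring R N := fun q k _ => rfl
  set b : Polynomial (AddMonoidAlgebra ℂ ℤ) →+* agreeSubring R N :=
    RingHom.codRestrict (f.prod f) (agreeSubring R N) hdiag with hb
  set yy : Fin n → agreeSubring R N := fun l => ⟨(y l, y' l), fun k hk => h l k hk⟩ with hyy
  have key : ∀ (pr : EpsSeries R × EpsSeries R →+* EpsSeries R)
      (hpr1 : ∀ x : agreeSubring R N, pr x.val = x.val.1 ∨ pr x.val = x.val.2),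
      True := fun _ _ => trivial
  have h1 : VEval R V y
      = ((RingHom.fst (EpsSeries R) (EpsSeries R)).comp
          (agreeSubring R N).subtype) (MvPolynomial.eval₂ b yy V) := by
    rw [MvPolynomial.eval₂_comp_left]
    rfl
  have h2 : VEval R V y'
      = ((RingHom.snd (EpsSeries R) (EpsSeries R)).comp
          (agreeSubring R N).subtype) (MvPolynomial.eval₂ b yy V) := by
    rw [MvPolynomial.eval₂_comp_left]
    rfl
  intro k hk
  rw [h1, h2]
  exact (MvPolynomial.eval₂ b yy V).2 k hk

end Truncation
section ConcreteMaps

variable {n : ℕ}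

/-- The substitution `t ↦ t + s`, `Aᵢ ↦ Aᵢ` from `ℂ[t,A]` to `ℂ[t,s,A]`. -/
def shiftTS {n : ℕ} : AmpRing n →+* AmpRing2 n :=
  MvPolynomial.eval₂Hom MvPolynomial.C
    (fun v : Option (Fin n) => Option.elim v
      (MvPolynomial.X none + MvPolynomial.X (some none))
      (fun i => MvPolynomial.X (some (some i))))

/-- `shiftTS` followed by the constant-power-series embedding. -/
def psiG (n : ℕ) : AmpRing n →+* PowerSeries (AmpRing2 n) :=
  (PowerSeries.C (R := AmpRing2 n)).comp shiftTS

/-- Evaluation `s ↦ 0` as an endomorphism of `ℂ[t,s,A]`. -/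
def e0Hom {n : ℕ} : AmpRing2 n →+* AmpRing2 n :=
  MvPolynomial.eval₂Hom MvPolynomial.C
    (fun w : Option (Option (Fin n)) => if w = some none then 0 else MvPolynomial.X w)

/-- The substitution `t ↦ 0`, `Aᵢ ↦ Aᵢ` on `ℂ[t,A]`, as a ring hom. -/
def aevalT0 {n : ℕ} : AmpRing n →+* AmpRing n :=
  MvPolynomial.eval₂Hom MvPolynomial.C
    (fun v : Option (Fin n) => Option.elim v (0 : AmpRing n) (fun i => MvPolynomial.X (some i)))

lemma psiG_C (c : ℂ) : psiG n (MvPolynomial.C c) = PowerSeries.C (MvPolynomial.C c) := by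
  simp [psiG, shiftTS]

lemma psiG_algebraMap (c : ℂ) :
    psiG n (algebraMap ℂ (AmpRing n) c) = PowerSeries.C (algebraMap ℂ (AmpRing2 n) c) := by
  rw [MvPolynomial.algebraMap_eq, MvPolynomial.algebraMap_eq]; exact psiG_C c

lemma substSA_C (mvec : Fin n → ℤ) (Q : Fin n → EpsSeries (AmpRing n)) (c : ℂ) :
    substSA mvec Q (MvPolynomial.C c) = PowerSeries.C (MvPolynomial.C c) := by
  simp [substSA]

lemma substSA_algebraMap (mvec : Fin n → ℤ) (Q : Fin n → EpsSeries (AmpRing n)) (c : ℂ) :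
    substSA mvec Q (algebraMap ℂ (AmpRing n) c)
      = PowerSeries.C (algebraMap ℂ (AmpRing2 n) c) := by
  rw [MvPolynomial.algebraMap_eq, MvPolynomial.algebraMap_eq]; exact substSA_C mvec Q c

lemma pderiv_s_embedTA (x : AmpRing n) :
    MvPolynomial.pderiv (some none) (embedTA x) = 0 := by
  apply MvPolynomial.pderiv_eq_zero_of_notMem_vars
  intro hmem
  have h1 := MvPolynomial.vars_rename (Option.map (some : Fin n → Option (Fin n))) x hmem
  rw [Finset.mem_image] at h1
  obtain ⟨w, _, hw⟩ := h1
  cases w <;> simp at hw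

/-- `∂_s`-intertwining for `psiG`. -/
lemma pdSeries_psiG (p : AmpRing n) :
    pdSeries (some none) (psiG n p) = psiG n (MvPolynomial.pderiv none p) := by
  apply pdSeries_comp
  · intro a
    rw [psiG_C, pdSeries_C, MvPolynomial.pderiv_C, map_zero]
  · show pdSeries _ (PowerSeries.C (shiftTS (MvPolynomial.X none))) = 1
    rw [show shiftTS (MvPolynomial.X none)
        = MvPolynomial.X (none : Option (Option (Fin n))) + MvPolynomial.X (some none) by
      simp [shiftTS]]
    rw [pdSeries_C, map_add, MvPolynomial.pderiv_X_of_ne (by simp),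
      MvPolynomial.pderiv_X_self, zero_add, map_one]
  · intro i
    show pdSeries _ (PowerSeries.C (shiftTS (MvPolynomial.X (some i)))) = 0
    rw [show shiftTS (MvPolynomial.X (some i))
        = MvPolynomial.X (some (some i) : Option (Option (Fin n))) by simp [shiftTS]]
    rw [pdSeries_C, MvPolynomial.pderiv_X_of_ne (by simp), map_zero]

/-- Polynomial-level chain rule for `shiftTS`. -/
lemma pderiv_shiftTS (p : AmpRing n) :
    MvPolynomial.pderiv (some none) (shiftTS p) = shiftTS (MvPolynomial.pderiv none p) := by
  have h := congrArg (PowerSeries.coeff (R := (AmpRing2 n)) 0) (pdSeries_psiG p)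
  rwa [pdSeries_coeff, show psiG n p = PowerSeries.C (shiftTS p) from rfl,
    show psiG n (MvPolynomial.pderiv none p)
      = PowerSeries.C (shiftTS (MvPolynomial.pderiv none p)) from rfl,
    PowerSeries.coeff_zero_C, PowerSeries.coeff_zero_C] at h

/-- `∂_s`-intertwining for `substSA`. -/
lemma pdSeries_substSA (mvec : Fin n → ℤ) (Q : Fin n → EpsSeries (AmpRing n)) (p : AmpRing n) :
    pdSeries (some none) (substSA mvec Q p) = substSA mvec Q (MvPolynomial.pderiv none p) := by
  apply pdSeries_comp
  · intro a
    rw [substSA_C, pdSeries_C, MvPolynomial.pderiv_C, map_zero]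
  · show pdSeries _ (substSA mvec Q (MvPolynomial.X none)) = 1
    rw [show substSA mvec Q (MvPolynomial.X none)
        = PowerSeries.C (MvPolynomial.X (some none)) by simp [substSA]]
    rw [pdSeries_C, MvPolynomial.pderiv_X_self, map_one]
  · intro i
    show pdSeries _ (substSA mvec Q (MvPolynomial.X (some i))) = 0
    rw [show substSA mvec Q (MvPolynomial.X (some i))
        = PowerSeries.map embedTA (Pc Q i (mvec i)) by simp [substSA]]
    ext1 k
    rw [pdSeries_coeff, PowerSeries.coeff_map, pderiv_s_embedTA, map_zero]

lemma e0Hom_comp_shiftTS : (e0Hom (n := n)).comp shiftTS = embedTA := by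
  apply MvPolynomial.ringHom_ext
  · intro r; simp [e0Hom, shiftTS, embedTA]
  · intro v
    cases v <;> simp [e0Hom, shiftTS, embedTA]

lemma e0Hom_comp_embedTA : (e0Hom (n := n)).comp embedTA = embedTA := by
  apply MvPolynomial.ringHom_ext
  · intro r; simp [e0Hom, embedTA]
  · intro v
    cases v <;> simp [e0Hom, embedTA]

lemma evalS0_comp_shiftTS : (evalS0 (n := n)).comp shiftTS = RingHom.id _ := by
  apply MvPolynomial.ringHom_ext
  · intro r; simp [evalS0, shiftTS]
  · intro v
    cases v <;> simp [evalS0, shiftTS]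

lemma evalS0_comp_embedTA : (evalS0 (n := n)).comp embedTA = RingHom.id _ := by
  apply MvPolynomial.ringHom_ext
  · intro r; simp [evalS0, embedTA]
  · intro v
    cases v <;> simp [evalS0, embedTA]

lemma psiH0_comp_aevalT0 (mvec : Fin n → ℤ) (Q : Fin n → EpsSeries (AmpRing n)) :
    ((PowerSeries.map (e0Hom (n := n))).comp (substSA mvec Q)).comp aevalT0
      = (PowerSeries.map (e0Hom (n := n))).comp (substSA mvec Q) := by
  apply MvPolynomial.ringHom_ext
  · intro r
    simp [aevalT0, substSA, e0Hom, PowerSeries.map_C]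
  · intro v
    cases v with
    | none =>
        show (PowerSeries.map e0Hom) (substSA mvec Q (aevalT0 (MvPolynomial.X none)))
          = (PowerSeries.map e0Hom) (substSA mvec Q (MvPolynomial.X none))
        rw [show aevalT0 (MvPolynomial.X (none : Option (Fin n))) = 0 by simp [aevalT0],
          show substSA mvec Q (MvPolynomial.X (none : Option (Fin n)))
            = PowerSeries.C (MvPolynomial.X (some none)) by simp [substSA]]
        rw [map_zero, map_zero, PowerSeries.map_C]
        simp [e0Hom]
    | some i =>
        show (PowerSeries.map e0Hom) (substSA mvec Q (aevalT0 (MvPolynomial.X (some i))))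
          = (PowerSeries.map e0Hom) (substSA mvec Q (MvPolynomial.X (some i)))
        rw [show aevalT0 (MvPolynomial.X (some i : Option (Fin n)))
          = MvPolynomial.X (some i) by simp [aevalT0]]

lemma aevalT0_eq_aeval (x : AmpRing n) :
    aevalT0 x = MvPolynomial.aeval
      (fun v : Option (Fin n) => Option.elim v (0 : AmpRing n)
        (fun i => MvPolynomial.X (some i))) x := by
  rw [MvPolynomial.aeval_def, MvPolynomial.algebraMap_eq]
  rfl

end ConcreteMaps
section MainArgument

variable {n : ℕ} {mvec : Fin n → ℤ}
  {V : Fin n → MvPolynomial (Fin n) (Polynomial (AddMonoidAlgebra ℂ ℤ))}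
  {Q : Fin n → EpsSeries (AmpRing n)}

lemma ode_coeff (hQ : IsSecularFamily mvec V Q) (j : Fin n) (m : ℤ) (k : ℕ) :
    MvPolynomial.pderiv none ((PowerSeries.coeff (R := (ModeRing (AmpRing n))) k (Q j)).coeff m)
      + MvPolynomial.C (Complex.I * ((m : ℂ) - (mvec j : ℂ)))
        * ((PowerSeries.coeff (R := (ModeRing (AmpRing n))) k (Q j)).coeff m)
      = (PowerSeries.coeff (R := (ModeRing (AmpRing n))) k
          (PowerSeries.X * VEval (AmpRing n) (V j) Q)).coeff m := by
  have h := congrArg (PowerSeries.coeff (R := (AmpRing n)) k) (hQ.ode j m)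
  rwa [map_add, PowerSeries.coeff_mk, PowerSeries.coeff_C_mul, Pc, PowerSeries.coeff_mk,
    PowerSeries.coeff_mk] at h

lemma epsHom_psiG_coeff (q : EpsSeries (AmpRing n)) (K : ℕ) (m : ℤ) :
    (PowerSeries.coeff (R := (ModeRing (AmpRing2 n))) K (epsHom (psiG n) q)).coeff m
      = shiftTS ((PowerSeries.coeff (R := (ModeRing (AmpRing n))) K q).coeff m) := by
  rw [epsHom_coeff_apply, Finset.sum_eq_single K]
  · rw [show psiG n ((PowerSeries.coeff (R := (ModeRing (AmpRing n))) K q).coeff m)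
        = PowerSeries.C (shiftTS ((PowerSeries.coeff (R := (ModeRing (AmpRing n))) K q).coeff m))
      from rfl, Nat.sub_self, PowerSeries.coeff_zero_C]
  · intro k hk hkK
    rw [show psiG n ((PowerSeries.coeff (R := (ModeRing (AmpRing n))) k q).coeff m)
        = PowerSeries.C (shiftTS ((PowerSeries.coeff (R := (ModeRing (AmpRing n))) k q).coeff m))
      from rfl, PowerSeries.coeff_C, if_neg (by
        rw [Finset.mem_range] at hk
        omega)]
  · intro h
    exact absurd (Finset.mem_range.mpr (by omega)) h

lemma transported_ode (hQ : IsSecularFamily mvec V Q)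
    (ψ : AmpRing n →+* PowerSeries (AmpRing2 n))
    (hψC : ∀ c : ℂ, ψ (MvPolynomial.C c) = PowerSeries.C (MvPolynomial.C c))
    (hD : ∀ p, pdSeries (some none) (ψ p) = ψ (MvPolynomial.pderiv none p))
    (l : Fin n) (m : ℤ) (K : ℕ) :
    MvPolynomial.pderiv (some none)
        ((PowerSeries.coeff (R := (ModeRing (AmpRing2 n))) K (epsHom ψ (Q l))).coeff m)
      + MvPolynomial.C (Complex.I * ((m : ℂ) - (mvec l : ℂ)))
        * ((PowerSeries.coeff (R := (ModeRing (AmpRing2 n))) K (epsHom ψ (Q l))).coeff m)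
      = (PowerSeries.coeff (R := (ModeRing (AmpRing2 n))) K
          (PowerSeries.X * VEval (AmpRing2 n) (V l) (fun i => epsHom ψ (Q i)))).coeff m := by
  have hψC' : ∀ c : ℂ, ψ (algebraMap ℂ (AmpRing n) c)
      = PowerSeries.C (algebraMap ℂ (AmpRing2 n) c) := by
    intro c
    rw [MvPolynomial.algebraMap_eq, MvPolynomial.algebraMap_eq]
    exact hψC c
  set c := Complex.I * ((m : ℂ) - (mvec l : ℂ)) with hc
  rw [epsHom_coeff_apply, map_sum, Finset.mul_sum, ← Finset.sum_add_distrib]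
  have hterm : ∀ k ∈ Finset.range (K + 1),
      MvPolynomial.pderiv (some none)
          (PowerSeries.coeff (R := (AmpRing2 n)) (K - k)
            (ψ ((PowerSeries.coeff (R := (ModeRing (AmpRing n))) k (Q l)).coeff m)))
        + MvPolynomial.C c
          * PowerSeries.coeff (R := (AmpRing2 n)) (K - k)
              (ψ ((PowerSeries.coeff (R := (ModeRing (AmpRing n))) k (Q l)).coeff m))
      = PowerSeries.coeff (R := (AmpRing2 n)) (K - k)
          (ψ ((PowerSeries.coeff (R := (ModeRing (AmpRing n))) k
            (PowerSeries.X * VEval (AmpRing n) (V l) Q)).coeff m)) := by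
    intro k _
    rw [← pdSeries_coeff, hD, ← PowerSeries.coeff_C_mul, ← hψC c, ← map_mul, ← map_add,
      ← map_add, ode_coeff hQ l m k]
  rw [Finset.sum_congr rfl hterm, ← epsHom_coeff_apply, map_mul, epsHom_X,
    epsHom_VEval ψ hψC']

lemma main_claim (hQ : IsSecularFamily mvec V Q) :
    ∀ (K : ℕ) (l : Fin n),
      PowerSeries.coeff (R := (ModeRing (AmpRing2 n))) K (epsHom (psiG n) (Q l))
        = PowerSeries.coeff (R := (ModeRing (AmpRing2 n))) K (epsHom (substSA mvec Q) (Q l)) := by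
  intro K
  induction K using Nat.strong_induction_on with
  | _ K IH =>
    match K with
    | 0 =>
        intro l
        ext m : 1
        rw [epsHom_psiG_coeff, epsHom_coeff_apply, Finset.sum_range_one, hQ.coeff_zero l]
        rw [AddMonoidAlgebra.coeff_single, Finsupp.single_apply]
        by_cases h : mvec l = m
        · rw [if_pos h]
          rw [show substSA mvec Q (MvPolynomial.X (some l))
              = PowerSeries.map embedTA (Pc Q l (mvec l)) by simp [substSA]]
          rw [PowerSeries.coeff_map, Pc, PowerSeries.coeff_mk, hQ.coeff_zero l,
            AddMonoidAlgebra.coeff_single, Finsupp.single_eq_same]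
          simp [shiftTS, embedTA]
        · rw [if_neg h, map_zero, map_zero, map_zero]
    | (K' + 1) =>
        intro l
        ext m : 1
        set cG := (PowerSeries.coeff (R := (ModeRing (AmpRing2 n))) (K' + 1)
          (epsHom (psiG n) (Q l))).coeff m with hcG
        set cH := (PowerSeries.coeff (R := (ModeRing (AmpRing2 n))) (K' + 1)
          (epsHom (substSA mvec Q) (Q l))).coeff m with hcH
        have hG := transported_ode hQ (psiG n) (fun c => psiG_C c)
          (fun p => pdSeries_psiG p) l m (K' + 1)
        have hH := transported_ode hQ (substSA mvec Q) (fun c => substSA_C mvec Q c)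
          (fun p => pdSeries_substSA mvec Q p) l m (K' + 1)
        have hRHS : (PowerSeries.coeff (R := (ModeRing (AmpRing2 n))) (K' + 1)
              (PowerSeries.X * VEval (AmpRing2 n) (V l) (fun i => epsHom (psiG n) (Q i)))).coeff m
            = (PowerSeries.coeff (R := (ModeRing (AmpRing2 n))) (K' + 1)
              (PowerSeries.X * VEval (AmpRing2 n) (V l)
                (fun i => epsHom (substSA mvec Q) (Q i)))).coeff m := by
          rw [PowerSeries.coeff_succ_X_mul, PowerSeries.coeff_succ_X_mul]
          exact congrArg (fun f : ModeRing (AmpRing2 n) => f.coeff m)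
            (VEval_coeff_congr (V l) _ _ K'
              (fun i k hk => IH k (by omega) i) K' le_rfl)
        have hsub : MvPolynomial.pderiv (some none) (cG - cH)
            + MvPolynomial.C (Complex.I * ((m : ℂ) - (mvec l : ℂ))) * (cG - cH) = 0 := by
          rw [map_sub, mul_sub]
          have h3 : MvPolynomial.pderiv (some none) cG
              + MvPolynomial.C (Complex.I * ((m : ℂ) - (mvec l : ℂ))) * cG
              = MvPolynomial.pderiv (some none) cH
              + MvPolynomial.C (Complex.I * ((m : ℂ) - (mvec l : ℂ))) * cH :=
            hG.trans (hRHS.trans hH.symm)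
          linear_combination h3
        by_cases hm : m = mvec l
        · have hc0 : Complex.I * ((m : ℂ) - (mvec l : ℂ)) = 0 := by
            subst hm; simp
          have hp : MvPolynomial.pderiv (some none) (cG - cH) = 0 := by
            rw [hc0] at hsub
            simpa using hsub
          have he : e0Hom (cG - cH) = 0 := by
            rw [map_sub]
            have heG : e0Hom cG = embedTA
                ((PowerSeries.coeff (R := (ModeRing (AmpRing n))) (K' + 1) (Q l)).coeff (mvec l)) := by
              rw [hcG, hm, epsHom_psiG_coeff]
              exact RingHom.congr_fun e0Hom_comp_shiftTS _
            have heH : e0Hom cH = embedTA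
                ((PowerSeries.coeff (R := (ModeRing (AmpRing n))) (K' + 1) (Q l)).coeff (mvec l)) := by
              rw [hcH, hm, epsHom_coeff_apply, map_sum]
              have hterm : ∀ k ∈ Finset.range (K' + 2),
                  e0Hom (PowerSeries.coeff (R := (AmpRing2 n)) (K' + 1 - k)
                    (substSA mvec Q ((PowerSeries.coeff (R := (ModeRing (AmpRing n))) k (Q l)).coeff (mvec l))))
                  = PowerSeries.coeff (R := (AmpRing2 n)) (K' + 1 - k)
                      (PowerSeries.map e0Hom (substSA mvec Q
                        (aevalT0 ((PowerSeries.coeff (R := (ModeRing (AmpRing n))) k (Q l)).coeff (mvec l))))) := by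
                intro k _
                rw [← PowerSeries.coeff_map]
                exact congrArg (⇑(PowerSeries.coeff (R := (AmpRing2 n)) (K' + 1 - k)))
                  (RingHom.congr_fun (psiH0_comp_aevalT0 mvec Q).symm _)
              rw [Finset.sum_congr rfl hterm, Finset.sum_range_succ']
              have hzero : ∀ i ∈ Finset.range (K' + 1),
                  PowerSeries.coeff (R := (AmpRing2 n)) (K' + 1 - (i + 1))
                    (PowerSeries.map e0Hom (substSA mvec Q
                      (aevalT0 ((PowerSeries.coeff (R := (ModeRing (AmpRing n))) (i + 1) (Q l)).coeff (mvec l)))))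
                  = 0 := by
                intro i _
                rw [aevalT0_eq_aeval, hQ.resonant_vanish l (i + 1) (by omega), map_zero,
                  map_zero, map_zero]
              rw [Finset.sum_congr rfl hzero, Finset.sum_const_zero, zero_add]
              rw [hQ.coeff_zero l, AddMonoidAlgebra.coeff_single, Finsupp.single_eq_same,
                show aevalT0 (MvPolynomial.X (some l) : AmpRing n)
                  = MvPolynomial.X (some l) by simp [aevalT0],
                show substSA mvec Q (MvPolynomial.X (some l))
                  = PowerSeries.map embedTA (Pc Q l (mvec l)) by simp [substSA],
                show PowerSeries.map e0Hom (PowerSeries.map embedTA (Pc Q l (mvec l)))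
                  = PowerSeries.map ((e0Hom (n := n)).comp embedTA) (Pc Q l (mvec l)) from
                    (RingHom.congr_fun (PowerSeries.map_comp (f := embedTA)
                      (g := (e0Hom (n := n)))) (Pc Q l (mvec l))).symm,
                e0Hom_comp_embedTA, PowerSeries.coeff_map, Pc,
                PowerSeries.coeff_mk, Nat.sub_zero]
            rw [heG, heH, sub_self]
          have := pderiv_zero_eval_zero (some none) (cG - cH) hp (by
            have : e0Hom (cG - cH) = MvPolynomial.eval₂ MvPolynomial.C
                (fun w : Option (Option (Fin n)) =>
                  if w = some none then 0 else MvPolynomial.X w) (cG - cH) := rfl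
            rw [← this, he])
          exact sub_eq_zero.mp this
        · have hcne : Complex.I * ((m : ℂ) - (mvec l : ℂ)) ≠ 0 := by
            apply mul_ne_zero Complex.I_ne_zero
            rw [sub_ne_zero]
            exact_mod_cast hm
          exact sub_eq_zero.mp (eigen_zero (some none) _ hcne _ hsub)

end MainArgument

/-- the RG equation, semisimple case: the renormalized amplitudes
`𝒜_j(ε,t,A) = P_{j,m_j}(ε,t,A)` satisfy
`∂_t 𝒜_j(ε,t,A) = [∂_s P_{j,m_j}(ε, s, 𝒜(ε,t,A))]|_{s=0}` in `ℂ[t,A][[ε]]`, and both sides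
are divisible by `ε` (slow dynamics). -/
theorem RG_equation {n : ℕ} (hn : 0 < n) (mvec : Fin n → ℤ)
    (V : Fin n → MvPolynomial (Fin n) (Polynomial (AddMonoidAlgebra ℂ ℤ)))
    (Q : Fin n → EpsSeries (AmpRing n))
    (hQ : IsSecularFamily mvec V Q) :
    ∀ j : Fin n,
      dT (Pc Q j (mvec j))
          = PowerSeries.map evalS0 (dS (substSeries (substSA mvec Q) (Pc Q j (mvec j))))
        ∧ PowerSeries.X ∣ dT (Pc Q j (mvec j))
        ∧ PowerSeries.X ∣
            PowerSeries.map evalS0 (dS (substSeries (substSA mvec Q) (Pc Q j (mvec j)))) := by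
  intro j
  have hmain : dT (Pc Q j (mvec j))
      = PowerSeries.map evalS0 (dS (substSeries (substSA mvec Q) (Pc Q j (mvec j)))) := by
    ext1 K
    rw [dT, PowerSeries.coeff_mk, PowerSeries.coeff_map, dS, PowerSeries.coeff_mk]
    have hcoeff : PowerSeries.coeff (R := (AmpRing2 n)) K
          (substSeries (substSA mvec Q) (Pc Q j (mvec j)))
        = (PowerSeries.coeff (R := (ModeRing (AmpRing2 n))) K
            (epsHom (substSA mvec Q) (Q j))).coeff (mvec j) := by
      rw [substSeries_coeff, epsHom_coeff_apply]
      apply Finset.sum_congr rfl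
      intro k _
      rw [Pc, PowerSeries.coeff_mk]
    rw [hcoeff, ← main_claim hQ K j, epsHom_psiG_coeff, pderiv_shiftTS,
      show evalS0 (shiftTS ((MvPolynomial.pderiv none)
          (((PowerSeries.coeff (R := (ModeRing (AmpRing n))) K) (Q j)).coeff (mvec j))))
        = ((evalS0 (n := n)).comp shiftTS) ((MvPolynomial.pderiv none)
          (((PowerSeries.coeff (R := (ModeRing (AmpRing n))) K) (Q j)).coeff (mvec j))) from rfl,
      evalS0_comp_shiftTS, Pc, PowerSeries.coeff_mk]
    rfl
  have hdvd : PowerSeries.X ∣ dT (Pc Q j (mvec j)) := by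
    rw [PowerSeries.X_dvd_iff, ← PowerSeries.coeff_zero_eq_constantCoeff_apply, dT,
      PowerSeries.coeff_mk, Pc, PowerSeries.coeff_mk, hQ.coeff_zero j,
      AddMonoidAlgebra.coeff_single, Finsupp.single_eq_same, MvPolynomial.pderiv_X_of_ne (by simp)]
  exact ⟨hmain, hdvd, hmain ▸ hdvd⟩

end
end

section
/- Let {P_{j,m}(ε,t,A)} be a secular-coefficient family, and assume in addition that the system is autonomous, i.e. each V_j does not involve z, z⁻¹ (V_j ∈ ℂ[ε, y_1,…,y_n]). Then for every u ∈ ℝ and all 1 ≤ j ≤ n, m ∈ ℤ: P_{j,m}(ε, t, A) = e^{imu} · P_{j,m}(ε, t, (e^{−i m_1 u} A_1, …, e^{−i m_n u} A_n)), where for each ε-order the two sides are equal as polynomial functions of (t, A) ∈ ℝ × ℂⁿ. Equivalently, every monomial ε^k t^l A_1^{r_1}⋯A_n^{r_n} occurring with nonzero coefficient in P_{j,m} satisfies r_1 m_1 + ⋯ + r_n m_n = m. -/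
noncomputable section

open Polynomial

/-- Evaluation of an element of `ℂ[t,A]` at a point `(t, A) ∈ ℝ × ℂⁿ`. -/
def evalPt {n : ℕ} (t : ℝ) (A : Fin n → ℂ) (p : AmpRing n) : ℂ :=
  MvPolynomial.eval (fun v : Option (Fin n) => Option.elim v (t : ℂ) A) p

section AuxHomog

variable {n : ℕ}

/-- Weight function: `t` has weight 0, `A i` has weight `mvec i`. -/
def wfun (mvec : Fin n → ℤ) : Option (Fin n) → ℤ := fun v => v.elim 0 mvec

lemma weight_wfun (mvec : Fin n → ℤ) (d : Option (Fin n) →₀ ℕ) :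
    Finsupp.weight (wfun mvec) d = ∑ i : Fin n, (d (some i) : ℤ) * mvec i := by
  rw [Finsupp.weight_apply, Finsupp.sum_fintype]
  · rw [Fintype.sum_option]
    simp [wfun, nsmul_eq_mul]
  · intro i; exact zero_smul ℕ _

lemma weight_wfun_single_none (mvec : Fin n → ℤ) :
    Finsupp.weight (wfun mvec) (Finsupp.single none 1) = 0 := by
  rw [weight_wfun]; simp

lemma coeff_pderiv {σ : Type*} [DecidableEq σ] (i : σ) (p : MvPolynomial σ ℂ)
    (e : σ →₀ ℕ) :
    MvPolynomial.coeff e (MvPolynomial.pderiv i p) =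
      ((e i : ℂ) + 1) * MvPolynomial.coeff (e + Finsupp.single i 1) p := by
  induction p using MvPolynomial.induction_on' with
  | add p q hp hq => simp [hp, hq, mul_add]
  | monomial d c =>
    rw [MvPolynomial.pderiv_monomial, MvPolynomial.coeff_monomial, MvPolynomial.coeff_monomial]
    by_cases hd : d i = 0
    · have h2 : d ≠ e + Finsupp.single i 1 := by
        intro h
        have h3 := DFunLike.congr_fun h i
        simp only [Finsupp.add_apply, Finsupp.single_eq_same] at h3
        omega
      rw [if_neg h2, mul_zero]
      split_ifs with h1
      · simp [hd]
      · rfl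
    · have key : d - Finsupp.single i 1 = e ↔ d = e + Finsupp.single i 1 := by
        constructor
        · intro h
          ext x
          have hx := DFunLike.congr_fun h x
          simp only [Finsupp.tsub_apply] at hx
          simp only [Finsupp.add_apply, ← hx]
          rcases eq_or_ne x i with rfl | hxi
          · rw [Finsupp.single_eq_same]
            omega
          · rw [Finsupp.single_eq_of_ne' (Ne.symm hxi)]
            omega
        · intro h; subst h; exact add_tsub_cancel_right _ _
      split_ifs with h1 h2 h2
      · have hdi : d i = e i + 1 := by
          have h3 := DFunLike.congr_fun h2 i
          simpa [Finsupp.add_apply, Finsupp.single_eq_same] using h3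
        rw [hdi]
        push_cast
        ring
      · exact absurd (key.mp h1) h2
      · exact absurd (key.mpr h2) h1
      · rw [mul_zero]

end AuxHomog

lemma coeff_aeval_t0 {n : ℕ} (p : AmpRing n) (e : Option (Fin n) →₀ ℕ) (he : e none = 0) :
    MvPolynomial.coeff e (MvPolynomial.aeval
      (fun v : Option (Fin n) => Option.elim v (0 : AmpRing n) fun i => MvPolynomial.X (some i)) p)
      = MvPolynomial.coeff e p := by
  induction p using MvPolynomial.induction_on' with
  | add p q hp hq => rw [map_add, MvPolynomial.coeff_add, MvPolynomial.coeff_add, hp, hq]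
  | monomial d c =>
    rw [MvPolynomial.aeval_monomial]
    by_cases hd : d none = 0
    · have hprod : (Finsupp.prod d fun v k =>
          (Option.elim v (0 : AmpRing n) fun i => MvPolynomial.X (some i)) ^ k)
          = Finsupp.prod d fun v k => (MvPolynomial.X v : AmpRing n) ^ k := by
        apply Finsupp.prod_congr
        intro v hv
        cases v with
        | none => exact absurd hd (Finsupp.mem_support_iff.mp hv)
        | some i => rfl
      rw [hprod, MvPolynomial.algebraMap_eq, ← MvPolynomial.monomial_eq]
    · have hmem : none ∈ d.support := Finsupp.mem_support_iff.mpr hd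
      have hzero : (Finsupp.prod d fun v k =>
          (Option.elim v (0 : AmpRing n) fun i => MvPolynomial.X (some i)) ^ k) = 0 := by
        rw [Finsupp.prod]
        exact Finset.prod_eq_zero hmem (by simp [zero_pow hd])
      rw [hzero, mul_zero, MvPolynomial.coeff_zero, MvPolynomial.coeff_monomial,
        if_neg (fun h => hd (by rw [h]; exact he))]

lemma ode_homog {n : ℕ} (mvec : Fin n → ℤ) {m : ℤ} {lam : ℂ} {P F : AmpRing n}
    (hode : MvPolynomial.pderiv none P + MvPolynomial.C lam * P = F)
    (hF : MvPolynomial.IsWeightedHomogeneous (wfun mvec) F m)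
    (hres : lam = 0 → MvPolynomial.aeval
      (fun v : Option (Fin n) => Option.elim v (0 : AmpRing n) fun i => MvPolynomial.X (some i))
      P = 0) :
    MvPolynomial.IsWeightedHomogeneous (wfun mvec) P m := by
  have key : ∀ e : Option (Fin n) →₀ ℕ, Finsupp.weight (wfun mvec) e ≠ m →
      ((e none : ℂ) + 1) * MvPolynomial.coeff (e + Finsupp.single none 1) P
        + lam * MvPolynomial.coeff e P = 0 := by
    intro e he
    have h1 := congrArg (MvPolynomial.coeff e) hode
    rw [MvPolynomial.coeff_add, MvPolynomial.coeff_C_mul, coeff_pderiv] at h1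
    rw [h1]
    exact hF.coeff_eq_zero e he
  have wshift : ∀ e : Option (Fin n) →₀ ℕ,
      Finsupp.weight (wfun mvec) (e + Finsupp.single none 1) = Finsupp.weight (wfun mvec) e := by
    intro e
    rw [map_add, weight_wfun_single_none, add_zero]
  intro d hd
  by_contra hw
  apply hd
  rcases eq_or_ne lam 0 with h0 | h0
  · have hres0 := hres h0
    have hstep : ∀ e : Option (Fin n) →₀ ℕ, Finsupp.weight (wfun mvec) e ≠ m →
        MvPolynomial.coeff (e + Finsupp.single none 1) P = 0 := by
      intro e he
      have h1 := key e he
      rw [h0, zero_mul, add_zero] at h1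
      have h2 : ((e none : ℂ) + 1) ≠ 0 := by
        have : ((e none : ℂ) + 1) = ((e none + 1 : ℕ) : ℂ) := by push_cast; ring
        rw [this]
        exact_mod_cast Nat.succ_ne_zero (e none)
      exact (mul_eq_zero.mp h1).resolve_left h2
    by_cases hdn : d none = 0
    · rw [← coeff_aeval_t0 P d hdn, hres0, MvPolynomial.coeff_zero]
    · have hrepr : d = (d - Finsupp.single none 1) + Finsupp.single none 1 := by
        ext x
        rcases eq_or_ne x none with rfl | hx
        · simp only [Finsupp.add_apply, Finsupp.tsub_apply, Finsupp.single_eq_same]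
          omega
        · simp only [Finsupp.add_apply, Finsupp.tsub_apply,
            Finsupp.single_eq_of_ne' (Ne.symm hx)]
          omega
      rw [hrepr]
      apply hstep
      rw [← wshift, ← hrepr]
      exact hw
  · have main : ∀ (N : ℕ) (e : Option (Fin n) →₀ ℕ), Finsupp.weight (wfun mvec) e ≠ m →
        P.totalDegree < (Finsupp.sum e fun _ k => k) + N → MvPolynomial.coeff e P = 0 := by
      intro N
      induction N with
      | zero =>
        intro e _ hlt
        exact MvPolynomial.coeff_eq_zero_of_totalDegree_lt (by simpa [Finsupp.sum] using hlt)
      | succ N IH =>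
        intro e he hlt
        rcases Nat.lt_or_ge P.totalDegree (Finsupp.sum e fun _ k => k) with h | h
        · exact MvPolynomial.coeff_eq_zero_of_totalDegree_lt (by simpa [Finsupp.sum] using h)
        · have h1 := key e he
          have h2 : MvPolynomial.coeff (e + Finsupp.single none 1) P = 0 := by
            apply IH
            · rw [wshift]; exact he
            · have hsum : (Finsupp.sum (e + Finsupp.single none 1) fun _ k => k)
                  = (Finsupp.sum e fun _ k => k) + 1 := by
                rw [Finsupp.sum_add_index (by simp) (by simp)]
                simp
              omega
          rw [h2, mul_zero, zero_add] at h1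
          exact (mul_eq_zero.mp h1).resolve_left h0
    exact main (P.totalDegree + 1) d hw (by omega)
/-- The graded subring of `EpsSeries (AmpRing n)`: mode-`m` coefficients at every `ε`-order
are weighted homogeneous of degree `m`. -/
def gradedSub {n : ℕ} (mvec : Fin n → ℤ) : Subring (EpsSeries (AmpRing n)) where
  carrier := { x | ∀ (k : ℕ) (m : ℤ),
    MvPolynomial.IsWeightedHomogeneous (wfun mvec)
      ((PowerSeries.coeff (R := ModeRing (AmpRing n)) k x).coeff m) m }
  zero_mem' := by
    intro k m
    simp only [map_zero, AddMonoidAlgebra.coeff_zero, Finsupp.coe_zero, Pi.zero_apply]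
    exact MvPolynomial.isWeightedHomogeneous_zero _ _ _
  one_mem' := by
    intro k m
    rw [PowerSeries.coeff_one]
    rcases eq_or_ne k 0 with rfl | hk
    · rw [if_pos rfl, AddMonoidAlgebra.one_def, AddMonoidAlgebra.coeff_single, Finsupp.single_apply]
      rcases eq_or_ne (0 : ℤ) m with rfl | hm
      · rw [if_pos rfl]
        exact MvPolynomial.isWeightedHomogeneous_one _ _
      · rw [if_neg hm]
        exact MvPolynomial.isWeightedHomogeneous_zero _ _ _
    · rw [if_neg hk]
      simp only [AddMonoidAlgebra.coeff_zero, Finsupp.coe_zero, Pi.zero_apply]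
      exact MvPolynomial.isWeightedHomogeneous_zero _ _ _
  add_mem' := by
    intro a b ha hb k m
    rw [map_add, AddMonoidAlgebra.coeff_add, Finsupp.add_apply]
    exact (ha k m).add (hb k m)
  neg_mem' := by
    intro a ha k m
    rw [map_neg, AddMonoidAlgebra.coeff_neg, Finsupp.neg_apply]
    intro e he
    apply ha k m
    rwa [MvPolynomial.coeff_neg, neg_ne_zero] at he
  mul_mem' := by
    intro a b ha hb k m
    rw [PowerSeries.coeff_mul, AddMonoidAlgebra.coeff_sum, Finsupp.finset_sum_apply]
    apply MvPolynomial.IsWeightedHomogeneous.sum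
    intro p _
    rw [AddMonoidAlgebra.coeff_mul]
    simp only [Finsupp.sum]
    apply MvPolynomial.IsWeightedHomogeneous.sum
    intro a1 _
    apply MvPolynomial.IsWeightedHomogeneous.sum
    intro a2 _
    split_ifs with h
    · have := (ha p.1 a1).mul (hb p.2 a2)
      rwa [h] at this
    · exact MvPolynomial.isWeightedHomogeneous_zero _ _ _

lemma X_mem_gradedSub {n : ℕ} (mvec : Fin n → ℤ) :
    (PowerSeries.X : EpsSeries (AmpRing n)) ∈ gradedSub mvec := by
  intro k m
  rw [PowerSeries.coeff_X]
  rcases eq_or_ne k 1 with rfl | hk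
  · rw [if_pos rfl, AddMonoidAlgebra.one_def, AddMonoidAlgebra.coeff_single, Finsupp.single_apply]
    rcases eq_or_ne (0 : ℤ) m with rfl | hm
    · rw [if_pos rfl]
      exact MvPolynomial.isWeightedHomogeneous_one _ _
    · rw [if_neg hm]
      exact MvPolynomial.isWeightedHomogeneous_zero _ _ _
  · rw [if_neg hk]
    simp only [AddMonoidAlgebra.coeff_zero, Finsupp.coe_zero, Pi.zero_apply]
    exact MvPolynomial.isWeightedHomogeneous_zero _ _ _

lemma zEval_single_zero_s6 {n : ℕ} (c : ℂ) :
    zEval (AmpRing n) (AddMonoidAlgebra.single 0 c)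
      = PowerSeries.C (R := ModeRing (AmpRing n)) (AddMonoidAlgebra.single 0 (MvPolynomial.C c)) := by
  have h1 : zEval (AmpRing n) (AddMonoidAlgebra.single 0 c)
      = ((PowerSeries.C (R := ModeRing (AmpRing n))).comp
          (AddMonoidAlgebra.singleZeroRingHom.comp (algebraMap ℂ (AmpRing n)))) c
        * ((Units.coeHom (EpsSeries (AmpRing n))).comp
            (zpowersHom (EpsSeries (AmpRing n))ˣ (zUnit (AmpRing n))))
            (Multiplicative.ofAdd (0 : ℤ)) :=
    AddMonoidAlgebra.liftNC_single _ _ _ _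
  rw [h1]
  have h2 : ((Units.coeHom (EpsSeries (AmpRing n))).comp
      (zpowersHom (EpsSeries (AmpRing n))ˣ (zUnit (AmpRing n))))
      (Multiplicative.ofAdd (0 : ℤ)) = 1 := by
    simp
  rw [h2, mul_one]
  simp [AddMonoidAlgebra.singleZeroRingHom, MvPolynomial.algebraMap_eq]

lemma C_single_zero_mem {n : ℕ} (mvec : Fin n → ℤ) (c : ℂ) :
    PowerSeries.C (R := ModeRing (AmpRing n)) (AddMonoidAlgebra.single 0 (MvPolynomial.C c))
      ∈ gradedSub mvec := by
  intro k m
  rw [PowerSeries.coeff_C]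
  rcases eq_or_ne k 0 with rfl | hk
  · rw [if_pos rfl, AddMonoidAlgebra.coeff_single, Finsupp.single_apply]
    rcases eq_or_ne (0 : ℤ) m with rfl | hm
    · rw [if_pos rfl]
      exact MvPolynomial.isWeightedHomogeneous_C _ _
    · rw [if_neg hm]
      exact MvPolynomial.isWeightedHomogeneous_zero _ _ _
  · rw [if_neg hk]
    simp only [AddMonoidAlgebra.coeff_zero, Finsupp.coe_zero, Pi.zero_apply]
    exact MvPolynomial.isWeightedHomogeneous_zero _ _ _

lemma fhom_mem {n : ℕ} (mvec : Fin n → ℤ) (w : Polynomial ℂ) :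
    Polynomial.eval₂ (RingHom.comp (zEval (AmpRing n)) AddMonoidAlgebra.singleZeroRingHom)
      PowerSeries.X w ∈ gradedSub mvec := by
  induction w using Polynomial.induction_on' with
  | add p q hp hq => rw [Polynomial.eval₂_add]; exact add_mem hp hq
  | monomial k c =>
    rw [Polynomial.eval₂_monomial]
    apply mul_mem _ (pow_mem (X_mem_gradedSub mvec) k)
    have h1 : (RingHom.comp (zEval (AmpRing n)) AddMonoidAlgebra.singleZeroRingHom) c
        = zEval (AmpRing n) (AddMonoidAlgebra.single 0 c) := by
      simp [AddMonoidAlgebra.singleZeroRingHom]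
    rw [h1, zEval_single_zero_s6]
    exact C_single_zero_mem mvec c

lemma eval₂_mem_gradedSub {n : ℕ} (mvec : Fin n → ℤ)
    {S : Type*} [CommSemiring S] (f : S →+* EpsSeries (AmpRing n))
    (y : Fin n → EpsSeries (AmpRing n)) (hy : ∀ i, y i ∈ gradedSub mvec)
    (hf : ∀ s, f s ∈ gradedSub mvec)
    (W : MvPolynomial (Fin n) S) :
    MvPolynomial.eval₂ f y W ∈ gradedSub mvec := by
  induction W using MvPolynomial.induction_on with
  | C a => rw [MvPolynomial.eval₂_C]; exact hf a
  | add p q hp hq => rw [MvPolynomial.eval₂_add]; exact add_mem hp hq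
  | mul_X p i hp => rw [MvPolynomial.eval₂_mul, MvPolynomial.eval₂_X]; exact mul_mem hp (hy i)

lemma coeff_eval₂_congr {n : ℕ} {S : Type*} [CommSemiring S]
    (f : S →+* EpsSeries (AmpRing n)) {K : ℕ} {y y' : Fin n → EpsSeries (AmpRing n)}
    (h : ∀ i, ∀ k ≤ K, PowerSeries.coeff (R := ModeRing (AmpRing n)) k (y i)
      = PowerSeries.coeff (R := ModeRing (AmpRing n)) k (y' i))
    (W : MvPolynomial (Fin n) S) :
    ∀ k ≤ K, PowerSeries.coeff (R := ModeRing (AmpRing n)) k (MvPolynomial.eval₂ f y W)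
      = PowerSeries.coeff (R := ModeRing (AmpRing n)) k (MvPolynomial.eval₂ f y' W) := by
  have mul_congr : ∀ x x' z z' : EpsSeries (AmpRing n),
      (∀ k ≤ K, PowerSeries.coeff (R := ModeRing (AmpRing n)) k x
        = PowerSeries.coeff (R := ModeRing (AmpRing n)) k x') →
      (∀ k ≤ K, PowerSeries.coeff (R := ModeRing (AmpRing n)) k z
        = PowerSeries.coeff (R := ModeRing (AmpRing n)) k z') →
      ∀ k ≤ K, PowerSeries.coeff (R := ModeRing (AmpRing n)) k (x * z)
        = PowerSeries.coeff (R := ModeRing (AmpRing n)) k (x' * z') := by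
    intro x x' z z' hx hz k hk
    rw [PowerSeries.coeff_mul, PowerSeries.coeff_mul]
    apply Finset.sum_congr rfl
    intro p hp
    rw [Finset.HasAntidiagonal.mem_antidiagonal] at hp
    rw [hx p.1 (by omega), hz p.2 (by omega)]
  induction W using MvPolynomial.induction_on with
  | C a => intro k _; rw [MvPolynomial.eval₂_C, MvPolynomial.eval₂_C]
  | add p q hp hq =>
    intro k hk
    rw [MvPolynomial.eval₂_add, MvPolynomial.eval₂_add, map_add, map_add, hp k hk, hq k hk]
  | mul_X p i hp =>
    intro k hk
    rw [MvPolynomial.eval₂_mul, MvPolynomial.eval₂_mul, MvPolynomial.eval₂_X,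
      MvPolynomial.eval₂_X]
    exact mul_congr _ _ _ _ hp (h i) k hk

/-- The main induction: all secular coefficients are weighted homogeneous. -/
lemma main_homog {n : ℕ} (mvec : Fin n → ℤ)
    (V : Fin n → MvPolynomial (Fin n) (Polynomial (AddMonoidAlgebra ℂ ℤ)))
    (hV : ∀ j, ∃ W : MvPolynomial (Fin n) (Polynomial ℂ),
      V j = MvPolynomial.map (Polynomial.mapRingHom AddMonoidAlgebra.singleZeroRingHom) W)
    (Q : Fin n → EpsSeries (AmpRing n)) (hQ : IsSecularFamily mvec V Q) :
    ∀ (k : ℕ) (j : Fin n) (m : ℤ),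
      MvPolynomial.IsWeightedHomogeneous (wfun mvec)
        ((PowerSeries.coeff (R := ModeRing (AmpRing n)) k (Q j)).coeff m) m := by
  intro k
  induction k using Nat.strong_induction_on with
  | _ k IH =>
  intro j m
  cases k with
  | zero =>
    rw [hQ.coeff_zero j, AddMonoidAlgebra.coeff_single, Finsupp.single_apply]
    split_ifs with h
    · have := MvPolynomial.isWeightedHomogeneous_X ℂ (wfun mvec) (some j)
      rwa [show wfun mvec (some j) = mvec j from rfl, h] at this
    · exact MvPolynomial.isWeightedHomogeneous_zero _ _ _
  | succ k' =>
    have hodek := congrArg (PowerSeries.coeff (R := AmpRing n) (k' + 1)) (hQ.ode j m)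
    simp only [map_add, PowerSeries.coeff_mk, PowerSeries.coeff_C_mul, Pc] at hodek
    rw [PowerSeries.coeff_succ_X_mul] at hodek
    apply ode_homog mvec hodek
    · -- homogeneity of the forcing term
      set Q' : Fin n → EpsSeries (AmpRing n) := fun i =>
        PowerSeries.mk fun k0 =>
          if k0 ≤ k' then PowerSeries.coeff (R := ModeRing (AmpRing n)) k0 (Q i) else 0 with hQ'
      have hagree : ∀ i, ∀ k0 ≤ k', PowerSeries.coeff (R := ModeRing (AmpRing n)) k0 (Q i)
          = PowerSeries.coeff (R := ModeRing (AmpRing n)) k0 (Q' i) := by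
        intro i k0 hk0
        rw [hQ']
        simp only [PowerSeries.coeff_mk, if_pos hk0]
      have hmem : ∀ i, Q' i ∈ gradedSub mvec := by
        intro i k0 m0
        rw [hQ']
        simp only [PowerSeries.coeff_mk]
        split_ifs with hk0
        · exact IH k0 (by omega) i m0
        · simp only [AddMonoidAlgebra.coeff_zero, Finsupp.coe_zero, Pi.zero_apply]
          exact MvPolynomial.isWeightedHomogeneous_zero _ _ _
      have hVmem : VEval (AmpRing n) (V j) Q' ∈ gradedSub mvec := by
        obtain ⟨W, hW⟩ := hV j
        rw [VEval, hW, MvPolynomial.eval₂_map]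
        apply eval₂_mem_gradedSub mvec _ _ hmem
        intro s
        have h2 : (RingHom.comp (Polynomial.eval₂RingHom (zEval (AmpRing n)) PowerSeries.X)
            (Polynomial.mapRingHom AddMonoidAlgebra.singleZeroRingHom)) s
            = Polynomial.eval₂
              (RingHom.comp (zEval (AmpRing n)) AddMonoidAlgebra.singleZeroRingHom)
              PowerSeries.X s := by
          simp only [RingHom.comp_apply, Polynomial.coe_mapRingHom,
            Polynomial.coe_eval₂RingHom, Polynomial.eval₂_map]
        rw [h2]
        exact fhom_mem mvec s
      have hcongr := coeff_eval₂_congr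
        (Polynomial.eval₂RingHom (zEval (AmpRing n)) PowerSeries.X)
        hagree (V j) k' le_rfl
      rw [show VEval (AmpRing n) (V j) Q
          = MvPolynomial.eval₂ (Polynomial.eval₂RingHom (zEval (AmpRing n)) PowerSeries.X) Q
            (V j) from rfl, hcongr]
      exact hVmem k' m
    · -- resonance
      intro hlam
      have hm : m = mvec j := by
        rcases mul_eq_zero.mp hlam with h | h
        · exact absurd h Complex.I_ne_zero
        · have h3 := sub_eq_zero.mp h
          exact_mod_cast h3
      rw [hm]
      exact hQ.resonant_vanish j (k' + 1) (by omega)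
/-- homogeneity of the secular coefficients in the autonomous case:
if each `V_j` does not involve `z, z⁻¹` then for every `u ∈ ℝ`
`P_{j,m}(ε, t, A) = e^{imu} P_{j,m}(ε, t, (e^{-i m₁ u} A₁, …, e^{-i mₙ u} Aₙ))`
(at each `ε`-order, as polynomial functions of `(t,A) ∈ ℝ × ℂⁿ`); equivalently, every
monomial `ε^k t^l A₁^{r₁} ⋯ Aₙ^{rₙ}` occurring in `P_{j,m}` with nonzero coefficient
satisfies `r₁ m₁ + ⋯ + rₙ mₙ = m`. -/
theorem autonomous_homogeneity {n : ℕ} (hn : 0 < n) (mvec : Fin n → ℤ)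
    (V : Fin n → MvPolynomial (Fin n) (Polynomial (AddMonoidAlgebra ℂ ℤ)))
    (hV : ∀ j, ∃ W : MvPolynomial (Fin n) (Polynomial ℂ),
      V j = MvPolynomial.map (Polynomial.mapRingHom AddMonoidAlgebra.singleZeroRingHom) W)
    (Q : Fin n → EpsSeries (AmpRing n))
    (hQ : IsSecularFamily mvec V Q) :
    ∀ (j : Fin n) (m : ℤ),
      (∀ (u : ℝ) (k : ℕ) (t : ℝ) (A : Fin n → ℂ),
        evalPt t A (PowerSeries.coeff (R := AmpRing n) k (Pc Q j m))
          = Complex.exp (Complex.I * (m : ℂ) * (u : ℂ))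
              * evalPt t (fun i => Complex.exp (-(Complex.I * (mvec i : ℂ) * (u : ℂ))) * A i)
                  (PowerSeries.coeff (R := AmpRing n) k (Pc Q j m)))
      ∧ (∀ (k : ℕ) (dexp : Option (Fin n) →₀ ℕ),
          MvPolynomial.coeff dexp (PowerSeries.coeff (R := AmpRing n) k (Pc Q j m)) ≠ 0 →
            ∑ i : Fin n, (dexp (some i) : ℤ) * mvec i = m) := by
  intro j m
  have hmain : ∀ (k : ℕ) (dexp : Option (Fin n) →₀ ℕ),
      MvPolynomial.coeff dexp (PowerSeries.coeff (R := AmpRing n) k (Pc Q j m)) ≠ 0 →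
        ∑ i : Fin n, (dexp (some i) : ℤ) * mvec i = m := by
    intro k dexp hne
    have h := main_homog mvec V hV Q hQ k j m
    rw [show (PowerSeries.coeff (R := AmpRing n) k (Pc Q j m))
        = (PowerSeries.coeff (R := ModeRing (AmpRing n)) k (Q j)).coeff m from by
      rw [Pc, PowerSeries.coeff_mk]] at hne
    have h2 := h hne
    rwa [weight_wfun] at h2
  refine ⟨?_, hmain⟩
  intro u k t A
  rw [evalPt, evalPt, MvPolynomial.eval_eq', MvPolynomial.eval_eq', Finset.mul_sum]
  apply Finset.sum_congr rfl
  intro d hd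
  have hw := hmain k d (MvPolynomial.mem_support_iff.mp hd)
  have hsum : ∑ i : Fin n, (d (some i) : ℂ) * (mvec i : ℂ) = (m : ℂ) := by
    have h3 := congrArg (fun z : ℤ => (z : ℂ)) hw
    push_cast at h3
    exact h3
  rw [Fintype.prod_option, Fintype.prod_option]
  simp only [Option.elim]
  have key : Complex.exp (Complex.I * (m : ℂ) * (u : ℂ))
      * ∏ i : Fin n, Complex.exp (-(Complex.I * (mvec i : ℂ) * (u : ℂ))) ^ (d (some i)) = 1 := by
    have hterm : ∀ i : Fin n,
        Complex.exp (-(Complex.I * (mvec i : ℂ) * (u : ℂ))) ^ (d (some i))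
          = Complex.exp ((d (some i) : ℂ) * (-(Complex.I * (mvec i : ℂ) * (u : ℂ)))) := by
      intro i
      rw [Complex.exp_nat_mul]
    rw [Finset.prod_congr rfl (fun i _ => hterm i), ← Complex.exp_sum, ← Complex.exp_add]
    rw [show (∑ i : Fin n, (d (some i) : ℂ) * (-(Complex.I * (mvec i : ℂ) * (u : ℂ))))
        = -(Complex.I * (u : ℂ)) * ∑ i : Fin n, (d (some i) : ℂ) * (mvec i : ℂ) from by
      rw [Finset.mul_sum]; exact Finset.sum_congr rfl (fun i _ => by ring)]
    rw [hsum,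
      show Complex.I * (m : ℂ) * (u : ℂ) + -(Complex.I * (u : ℂ)) * (m : ℂ) = 0 from by ring]
    exact Complex.exp_zero
  simp only [mul_pow, Finset.prod_mul_distrib]
  linear_combination
    (-(MvPolynomial.coeff d (PowerSeries.coeff (R := AmpRing n) k (Pc Q j m))
      * ((t : ℂ)) ^ (d none) * ∏ i : Fin n, (A i) ^ (d (some i)))) * key

end
end

section
/- Let {P_{j,m}(ε,t,A)} be a nilpotent secular-coefficient family with renormalized amplitudes 𝒜_j(ε,t,A) = P_{j,0}(ε,t,A). Then for all 1 ≤ j ≤ n and all m ∈ ℤ the functional relation P_{j,m}(ε, t, A) = P_{j,m}(ε, t − s, 𝒜(ε, s, A)) holds as an identity of formal power series in ε with coefficients in ℂ[t, s, A_1,…,A_n], where the right-hand side means: substitute t − s for the t-variable and 𝒜_i(ε,s,A) for the A_i-variable (each i) in P_{j,m}. -/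
noncomputable section

open Polynomial

/-- `g(t,A) = Σ_{k=1}^{n} A_k t^{k-1}/(k-1)!` as an element of `ℂ[t,A]` (here `0`-indexed:
`g = Σ_{k : Fin n} A_k t^k / k!`). -/
def gMv (n : ℕ) : AmpRing n :=
  ∑ k : Fin n, MvPolynomial.C ((1 : ℂ) / ((k : ℕ).factorial : ℂ))
    * MvPolynomial.X (some k) * MvPolynomial.X (none : Option (Fin n)) ^ (k : ℕ)

/-- The `(j+1)`-st secular coefficient, with the convention `P_{n+1,m} := 0`. -/
def PcNext {n : ℕ} (Q : Fin n → EpsSeries (AmpRing n)) (j : Fin n) (m : ℤ) :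
    PowerSeries (AmpRing n) :=
  if h : (j : ℕ) + 1 < n then Pc Q ⟨(j : ℕ) + 1, h⟩ m else 0

/-- A nilpotent secular-coefficient family for `dy/dt = Λ y + ε V(ε,e^{±it},y)`, `Λ` the upper
Jordan nilpotent block:
(a) at each `ε`-order only finitely many modes are nonzero (built into `ModeRing`);
(b) the `ε⁰`-coefficient of `P_{j,m}` is `δ_{m,0} d^{j-1}g/dt^{j-1}`;
(c) for `k ≥ 1` the `ε^k`-coefficient of the resonant `P_{j,0}` vanishes at `t = 0`;
(d) order by order in `ε` and mode by mode in `e^{imt}`: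
`∂_t P_{j,m} + i m P_{j,m} = P_{j+1,m} + [ε V_j(ε, e^{±it}, Σ_l P_{·,l} e^{ilt})]_{e^{imt}}`. -/
structure IsNilpotentSecularFamily {n : ℕ}
    (V : Fin n → MvPolynomial (Fin n) (Polynomial (AddMonoidAlgebra ℂ ℤ)))
    (Q : Fin n → EpsSeries (AmpRing n)) : Prop where
  coeff_zero : ∀ j : Fin n, PowerSeries.coeff (R := ModeRing (AmpRing n)) 0 (Q j)
      = AddMonoidAlgebra.single 0 ((fun p => MvPolynomial.pderiv none p)^[(j : ℕ)] (gMv n))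
  resonant_vanish : ∀ (j : Fin n) (k : ℕ), 1 ≤ k →
    MvPolynomial.aeval
      (fun v : Option (Fin n) => Option.elim v (0 : AmpRing n) (fun i => MvPolynomial.X (some i)))
      ((PowerSeries.coeff (R := ModeRing (AmpRing n)) k (Q j)).coeff 0) = 0
  ode : ∀ (j : Fin n) (m : ℤ),
    (PowerSeries.mk fun k =>
        MvPolynomial.pderiv none ((PowerSeries.coeff (R := ModeRing (AmpRing n)) k (Q j)).coeff m))
      + PowerSeries.C (MvPolynomial.C (Complex.I * (m : ℂ))) * Pc Q j m
      = PcNext Q j m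
        + PowerSeries.mk fun k =>
            (PowerSeries.coeff (R := ModeRing (AmpRing n)) k
              (PowerSeries.X * VEval (AmpRing n) (V j) Q)).coeff m

/-- The renormalized amplitude `𝒜_i(ε,s,A) = P_{i,0}(ε,s,A)`, as an element of
`ℂ[t,s,A][[ε]]` (the `t`-variable of `P` renamed to `s`). -/
def renAmpS0 {n : ℕ} (Q : Fin n → EpsSeries (AmpRing n)) (i : Fin n) :
    PowerSeries (AmpRing2 n) :=
  PowerSeries.map renameTS (Pc Q i 0)

/-- The substitution `t ↦ t - s`, `A_i ↦ 𝒜_i(ε,s,A)`, as a ring map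
`ℂ[t,A] → ℂ[t,s,A][[ε]]`. -/
def substTA0 {n : ℕ} (Q : Fin n → EpsSeries (AmpRing n)) :
    AmpRing n →+* PowerSeries (AmpRing2 n) :=
  MvPolynomial.eval₂Hom ((PowerSeries.C (R := AmpRing2 n)).comp MvPolynomial.C)
    (fun v : Option (Fin n) => Option.elim v
      (PowerSeries.C (MvPolynomial.X none - MvPolynomial.X (some none)))
      (fun i => renAmpS0 Q i))

namespace NFR

variable {R R' : Type} [CommRing R] [CommRing R']

lemma substSeries_coeff (φ : R →+* PowerSeries R') (p : PowerSeries R) (K : ℕ) :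
    PowerSeries.coeff (R := R') K (substSeries φ p)
      = ∑ k ∈ Finset.range (K + 1),
          PowerSeries.coeff (R := R') (K - k) (φ (PowerSeries.coeff (R := R) k p)) := by
  simp [substSeries]

lemma coeff_eval₂_poly (φ : R →+* PowerSeries R') (P : Polynomial R) (K : ℕ) :
    PowerSeries.coeff (R := R') K (Polynomial.eval₂ φ PowerSeries.X P)
      = ∑ k ∈ Finset.range (K + 1),
          PowerSeries.coeff (R := R') (K - k) (φ (P.coeff k)) := by
  rw [Polynomial.eval₂_eq_sum, Polynomial.sum_def, map_sum]
  rw [Finset.sum_subset_zero_on_sdiff (Finset.subset_union_left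
    (s₁ := P.support) (s₂ := Finset.range (K+1))) ?h1 (fun _ _ => rfl)]
  rw [(Finset.sum_subset_zero_on_sdiff (Finset.subset_union_right
    (s₁ := P.support) (s₂ := Finset.range (K+1))) ?h2 (fun _ _ => rfl)).symm]
  · apply Finset.sum_congr rfl
    intro k hk
    rw [Finset.mem_range] at hk
    rw [PowerSeries.coeff_mul_X_pow' _ k K]
    simp [Nat.lt_succ_iff.mp hk]
  · intro k hk
    simp only [Finset.mem_sdiff, Finset.mem_range, not_lt] at hk
    rw [PowerSeries.coeff_mul_X_pow' _ k K, if_neg (by omega)]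
  · intro k hk
    simp only [Finset.mem_sdiff, Polynomial.mem_support_iff, not_not] at hk
    simp [hk.2]

lemma coeff_substSeries_eq_trunc (φ : R →+* PowerSeries R') (p : PowerSeries R) (K N : ℕ)
    (hN : K < N) :
    PowerSeries.coeff (R := R') K (substSeries φ p)
      = PowerSeries.coeff (R := R') K (Polynomial.eval₂ φ PowerSeries.X (PowerSeries.trunc N p)) := by
  rw [coeff_eval₂_poly, substSeries_coeff]
  apply Finset.sum_congr rfl
  intro k hk
  rw [Finset.mem_range, Nat.lt_succ_iff] at hk
  rw [PowerSeries.coeff_trunc]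
  rw [if_pos (lt_of_le_of_lt hk hN)]

/-- substitution of coefficients, as a ring hom. -/
def substRingHom (φ : R →+* PowerSeries R') : PowerSeries R →+* PowerSeries R' where
  toFun := substSeries φ
  map_one' := by
    ext K
    rw [substSeries_coeff]
    rw [Finset.sum_eq_single 0]
    · simp
    · intro k hk hk0
      rw [PowerSeries.coeff_one, if_neg hk0]
      simp
    · simp
  map_mul' := by
    intro p q
    ext K
    have h1 : PowerSeries.coeff (R := R') K (substSeries φ (p * q))
        = PowerSeries.coeff (R := R') K (Polynomial.eval₂ φ PowerSeries.X
            (PowerSeries.trunc (K+1) p * PowerSeries.trunc (K+1) q)) := by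
      rw [coeff_substSeries_eq_trunc φ (p*q) K (K+1) (Nat.lt_succ_self K)]
      rw [coeff_eval₂_poly, coeff_eval₂_poly]
      apply Finset.sum_congr rfl
      intro k hk
      rw [Finset.mem_range, Nat.lt_succ_iff] at hk
      congr 1
      congr 1
      rw [Polynomial.coeff_mul, PowerSeries.coeff_trunc, if_pos (by omega : k < K + 1),
        PowerSeries.coeff_mul]
      apply Finset.sum_congr rfl
      intro x hx
      rw [Finset.HasAntidiagonal.mem_antidiagonal] at hx
      have hx1 : x.1 < K + 1 := by omega
      have hx2 : x.2 < K + 1 := by omega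
      rw [PowerSeries.coeff_trunc, PowerSeries.coeff_trunc, if_pos hx1, if_pos hx2]
    rw [h1, Polynomial.eval₂_mul, PowerSeries.coeff_mul, PowerSeries.coeff_mul]
    apply Finset.sum_congr rfl
    intro x hx
    rw [Finset.HasAntidiagonal.mem_antidiagonal] at hx
    rw [← coeff_substSeries_eq_trunc φ p x.1 (K+1) (by omega),
        ← coeff_substSeries_eq_trunc φ q x.2 (K+1) (by omega)]
  map_zero' := by
    ext K; rw [substSeries_coeff]; simp
  map_add' := by
    intro p q
    ext K
    rw [substSeries_coeff]
    simp only [map_add, PowerSeries.coeff_mk]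
    rw [substSeries_coeff, substSeries_coeff, ← Finset.sum_add_distrib]

lemma substRingHom_C (φ : R →+* PowerSeries R') (r : R) :
    substRingHom φ (PowerSeries.C (R := R) r) = φ r := by
  ext K
  show PowerSeries.coeff (R := R') K (substSeries φ _) = _
  rw [substSeries_coeff, Finset.sum_eq_single 0]
  · simp [PowerSeries.coeff_C]
  · intro k hk hk0
    rw [PowerSeries.coeff_C, if_neg hk0]; simp
  · simp

lemma substRingHom_X (φ : R →+* PowerSeries R') :
    substRingHom φ PowerSeries.X = PowerSeries.X := by
  ext K
  show PowerSeries.coeff (R := R') K (substSeries φ _) = _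
  rw [substSeries_coeff]
  rcases K with _ | K
  · simp [PowerSeries.coeff_X]
  · rw [Finset.sum_eq_single 1]
    · simp [PowerSeries.coeff_X, PowerSeries.coeff_one]
    · intro k hk hk0
      rw [PowerSeries.coeff_X, if_neg hk0]; simp
    · simp


lemma substRingHom_apply {R R' : Type} [CommRing R] [CommRing R'] (φ : R →+* PowerSeries R')
    (p : PowerSeries R) : substRingHom φ p = substSeries φ p := rfl

lemma coeff_substRingHom {R R' : Type} [CommRing R] [CommRing R'] (φ : R →+* PowerSeries R')
    (p : PowerSeries R) (K : ℕ) :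
    PowerSeries.coeff (R := R') K (substRingHom φ p)
      = ∑ k ∈ Finset.range (K + 1),
          PowerSeries.coeff (R := R') (K - k) (φ (PowerSeries.coeff (R := R) k p)) := by
  rw [substRingHom_apply]; simp [substSeries]

lemma substRingHom_C_comp {R R' : Type} [CommRing R] [CommRing R'] (f : R →+* R')
    (p : PowerSeries R) :
    substRingHom ((PowerSeries.C (R := R')).comp f) p = PowerSeries.map f p := by
  ext K
  rw [coeff_substRingHom, Finset.sum_eq_single K]
  · simp
  · intro k hk hkK
    rw [Finset.mem_range] at hk
    simp only [RingHom.coe_comp, Function.comp_apply]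
    rw [PowerSeries.coeff_C, if_neg (by omega)]
  · simp

variable {R : Type} [CommRing R]

lemma zUnit_pow_val (k : ℕ) :
    ((zUnit R ^ k : (EpsSeries R)ˣ) : EpsSeries R)
      = PowerSeries.C (AddMonoidAlgebra.single (k : ℤ) 1) := by
  induction k with
  | zero =>
    rw [pow_zero, Units.val_one]
    rw [show ((0:ℕ):ℤ) = 0 from rfl]
    rw [AddMonoidAlgebra.one_def.symm, map_one]
  | succ k ih =>
    rw [pow_succ, Units.val_mul, ih]
    show _ * (zUnit R).val = _
    rw [zUnit, ← map_mul, AddMonoidAlgebra.single_mul_single, mul_one]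
    norm_num

lemma zUnitInv_pow_val (k : ℕ) :
    (((zUnit R)⁻¹ ^ k : (EpsSeries R)ˣ) : EpsSeries R)
      = PowerSeries.C (AddMonoidAlgebra.single (-(k : ℤ)) 1) := by
  induction k with
  | zero =>
    rw [pow_zero, Units.val_one]
    rw [show (-((0:ℕ):ℤ)) = 0 by norm_num]
    rw [AddMonoidAlgebra.one_def.symm, map_one]
  | succ k ih =>
    rw [pow_succ, Units.val_mul, ih]
    show _ * ((zUnit R)⁻¹).val = _
    have : ((zUnit R)⁻¹).val = PowerSeries.C (AddMonoidAlgebra.single (-1) 1) := rfl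
    rw [this, ← map_mul, AddMonoidAlgebra.single_mul_single, mul_one]
    congr 2
    omega

lemma zUnit_zpow_val (m : ℤ) :
    ((zUnit R ^ m : (EpsSeries R)ˣ) : EpsSeries R)
      = PowerSeries.C (AddMonoidAlgebra.single m 1) := by
  rcases m with k | k
  · rw [Int.ofNat_eq_natCast, zpow_natCast]; exact zUnit_pow_val k
  · rw [zpow_negSucc, ← inv_pow]
    rw [zUnitInv_pow_val (R := R) (k + 1)]
    congr 2

lemma zEval_single [Algebra ℂ R] (m : ℤ) (c : ℂ) :
    zEval R (AddMonoidAlgebra.single m c)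
      = PowerSeries.C (AddMonoidAlgebra.single m (algebraMap ℂ R c)) := by
  rw [zEval, AddMonoidAlgebra.liftNCRingHom]
  show AddMonoidAlgebra.liftNC _ _ (AddMonoidAlgebra.single m c) = _
  rw [AddMonoidAlgebra.liftNC_single]
  show PowerSeries.C (AddMonoidAlgebra.single 0 (algebraMap ℂ R c))
      * ((zUnit R ^ m : (EpsSeries R)ˣ) : EpsSeries R) = _
  rw [zUnit_zpow_val, ← map_mul, AddMonoidAlgebra.single_mul_single, zero_add, mul_one]


/-- mode-wise extraction -/
def modeExtract {R : Type} [CommRing R] (u : EpsSeries R) (m : ℤ) : PowerSeries R :=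
  PowerSeries.mk fun k => (PowerSeries.coeff (R := ModeRing R) k u).coeff m

lemma coeff_modeExtract {R : Type} [CommRing R] (u : EpsSeries R) (m : ℤ) (k : ℕ) :
    PowerSeries.coeff (R := R) k (modeExtract u m) = (PowerSeries.coeff (R := ModeRing R) k u).coeff m := by
  simp [modeExtract]

section main
variable {R R' : Type} [CommRing R] [CommRing R']

/-- lift a coefficient substitution to the mode ring level -/
def psiHom (φ : R →+* PowerSeries R') : ModeRing R →+* EpsSeries R' :=
  AddMonoidAlgebra.liftNCRingHom
    ((PowerSeries.map AddMonoidAlgebra.singleZeroRingHom).comp φ)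
    ((Units.coeHom _).comp (zpowersHom _ (zUnit R')))
    (fun _ _ => Commute.all _ _)

lemma psiHom_single (φ : R →+* PowerSeries R') (m : ℤ) (a : R) :
    psiHom φ (AddMonoidAlgebra.single m a)
      = PowerSeries.map (AddMonoidAlgebra.singleZeroRingHom) (φ a)
        * PowerSeries.C (AddMonoidAlgebra.single m 1) := by
  rw [psiHom, AddMonoidAlgebra.liftNCRingHom]
  show AddMonoidAlgebra.liftNC _ _ _ = _
  rw [AddMonoidAlgebra.liftNC_single]
  congr 1
  exact zUnit_zpow_val m

lemma coeff_psiHom (φ : R →+* PowerSeries R') (f : ModeRing R) (d : ℕ) (m : ℤ) :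
    (PowerSeries.coeff (R := ModeRing R') d (psiHom φ f)).coeff m
      = PowerSeries.coeff (R := R') d (φ (f.coeff m)) := by
  induction f using AddMonoidAlgebra.induction_linear with
  | zero => simp
  | add f g hf hg =>
    have h1 : ((f + g : ModeRing R)).coeff m = f.coeff m + g.coeff m := rfl
    have h2 : ∀ (X Y : ModeRing R'), (X + Y).coeff m = X.coeff m + Y.coeff m := fun _ _ => rfl
    rw [map_add, map_add, h2, hf, hg, h1, map_add, map_add]
  | single m' a =>
    rw [psiHom_single, PowerSeries.coeff_mul_C, PowerSeries.coeff_map]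
    rw [show (AddMonoidAlgebra.singleZeroRingHom (PowerSeries.coeff (R := R') d (φ a)) : ModeRing R')
        = AddMonoidAlgebra.single 0 (PowerSeries.coeff (R := R') d (φ a)) from rfl]
    rw [AddMonoidAlgebra.single_mul_single, zero_add, mul_one]
    rw [AddMonoidAlgebra.coeff_single, AddMonoidAlgebra.coeff_single, Finsupp.single_apply,
      Finsupp.single_apply]
    split
    · rfl
    · rw [map_zero, map_zero]

/-- the full substitution on `EpsSeries` -/
def phiHom (φ : R →+* PowerSeries R') : EpsSeries R →+* EpsSeries R' :=
  substRingHom (psiHom φ)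

lemma modeExtract_phiHom (φ : R →+* PowerSeries R') (u : EpsSeries R) (m : ℤ) :
    modeExtract (phiHom φ u) m = substRingHom φ (modeExtract u m) := by
  ext K
  rw [coeff_modeExtract, coeff_substRingHom, phiHom, coeff_substRingHom]
  rw [AddMonoidAlgebra.coeff_sum, Finset.sum_apply']
  apply Finset.sum_congr rfl
  intro k _
  rw [coeff_psiHom, coeff_modeExtract]

variable [Algebra ℂ R] [Algebra ℂ R']

lemma phiHom_zEval (φ : R →+* PowerSeries R')
    (hφ : ∀ c : ℂ, φ (algebraMap ℂ R c) = PowerSeries.C (algebraMap ℂ R' c))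
    (w : AddMonoidAlgebra ℂ ℤ) :
    phiHom φ (zEval R w) = zEval R' w := by
  induction w using AddMonoidAlgebra.induction_linear with
  | zero => simp
  | add f g hf hg => rw [map_add, map_add, hf, hg, map_add]
  | single m c =>
    rw [zEval_single, zEval_single, phiHom, substRingHom_C, psiHom_single, hφ]
    rw [PowerSeries.map_C]
    rw [show (AddMonoidAlgebra.singleZeroRingHom ((algebraMap ℂ R') c) : ModeRing R')
        = AddMonoidAlgebra.single 0 ((algebraMap ℂ R') c) from rfl]
    rw [← map_mul, AddMonoidAlgebra.single_mul_single, zero_add, mul_one]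

lemma ringHom_VEval {n : ℕ} (F : EpsSeries R →+* EpsSeries R')
    (hz : ∀ w, F (zEval R w) = zEval R' w) (hX : F PowerSeries.X = PowerSeries.X)
    (V : MvPolynomial (Fin n) (Polynomial (AddMonoidAlgebra ℂ ℤ)))
    (y : Fin n → EpsSeries R) :
    F (VEval R V y) = VEval R' V (fun i => F (y i)) := by
  rw [VEval, MvPolynomial.eval₂_comp_left F, VEval]
  have h : F.comp (Polynomial.eval₂RingHom (zEval R) PowerSeries.X)
      = Polynomial.eval₂RingHom (zEval R') PowerSeries.X := by
    apply Polynomial.ringHom_ext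
    · intro a
      simp only [RingHom.coe_comp, Function.comp_apply, Polynomial.coe_eval₂RingHom,
        Polynomial.eval₂_C]
      exact hz a
    · simp only [RingHom.coe_comp, Function.comp_apply, Polynomial.coe_eval₂RingHom,
        Polynomial.eval₂_X]
      exact hX
  rw [h]
  rfl

end main

section part4
open MvPolynomial

variable {n : ℕ}

/-- coefficient-wise `d/dt` on power series over a polynomial ring -/
def Dmap {σ : Type} (i : σ) (u : PowerSeries (MvPolynomial σ ℂ)) :
    PowerSeries (MvPolynomial σ ℂ) :=
  PowerSeries.mk fun K => MvPolynomial.pderiv i (PowerSeries.coeff K u)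

lemma coeff_Dmap {σ : Type} (i : σ) (u : PowerSeries (MvPolynomial σ ℂ)) (K : ℕ) :
    PowerSeries.coeff K (Dmap i u) = MvPolynomial.pderiv i (PowerSeries.coeff K u) := by
  simp [Dmap]

lemma Dmap_add {σ : Type} (i : σ) (u w : PowerSeries (MvPolynomial σ ℂ)) :
    Dmap i (u + w) = Dmap i u + Dmap i w := by
  ext K; simp [Dmap]

lemma Dmap_mul {σ : Type} (i : σ) (u w : PowerSeries (MvPolynomial σ ℂ)) :
    Dmap i (u * w) = Dmap i u * w + u * Dmap i w := by
  refine PowerSeries.ext fun K => ?_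
  rw [coeff_Dmap, PowerSeries.coeff_mul, map_sum, map_add, PowerSeries.coeff_mul,
    PowerSeries.coeff_mul]
  rw [← Finset.sum_add_distrib]
  apply Finset.sum_congr rfl
  intro x _
  rw [pderiv_mul, coeff_Dmap, coeff_Dmap]

lemma pderiv_none_renameTS (p : AmpRing n) :
    MvPolynomial.pderiv none (renameTS p) = 0 := by
  induction p using MvPolynomial.induction_on with
  | C c =>
    have : (renameTS (MvPolynomial.C c) : AmpRing2 n) = MvPolynomial.C c := by simp [renameTS]
    rw [this, pderiv_C]
  | add p q hp hq => rw [map_add, map_add, hp, hq, add_zero]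
  | mul_X p v ih =>
    rw [map_mul, pderiv_mul, ih, zero_mul, zero_add]
    have : (renameTS (MvPolynomial.X v) : AmpRing2 n)
        = MvPolynomial.X (Option.elim v (some none) (fun i => some (some i))) := by
      simp [renameTS]
    rw [this, pderiv_X_of_ne (by cases v <;> simp), mul_zero]

lemma substTA0_C (Q : Fin n → EpsSeries (AmpRing n)) (c : ℂ) :
    substTA0 Q (MvPolynomial.C c) = PowerSeries.C (MvPolynomial.C c) := by
  simp [substTA0]

lemma substTA0_X_none (Q : Fin n → EpsSeries (AmpRing n)) :
    substTA0 Q (MvPolynomial.X (none : Option (Fin n)))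
      = PowerSeries.C (MvPolynomial.X none - MvPolynomial.X (some none)) := by
  simp [substTA0]

lemma substTA0_X_some (Q : Fin n → EpsSeries (AmpRing n)) (i : Fin n) :
    substTA0 Q (MvPolynomial.X (some i)) = renAmpS0 Q i := by
  simp [substTA0]

lemma Dmap_substTA0 (Q : Fin n → EpsSeries (AmpRing n)) (p : AmpRing n) :
    Dmap none (substTA0 Q p) = substTA0 Q (MvPolynomial.pderiv none p) := by
  induction p using MvPolynomial.induction_on with
  | C c =>
    rw [substTA0_C, pderiv_C, map_zero]
    refine PowerSeries.ext fun K => ?_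
    rw [coeff_Dmap, PowerSeries.coeff_C]
    split <;> simp
  | add p q hp hq => rw [map_add, Dmap_add, hp, hq, map_add, map_add]
  | mul_X p v ih =>
    rw [map_mul, Dmap_mul, ih, pderiv_mul, map_add, map_mul, map_mul]
    refine congrArg ((_ : PowerSeries (AmpRing2 n)) + ·) ?_
    refine congrArg ((_ : PowerSeries (AmpRing2 n)) * ·) ?_
    -- Dmap none (substTA0 Q (X v)) = substTA0 Q (pderiv none (X v))
    cases v with
    | none =>
      rw [substTA0_X_none, pderiv_X_self, map_one]
      refine PowerSeries.ext fun K => ?_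
      rw [coeff_Dmap, PowerSeries.coeff_C, PowerSeries.coeff_one]
      split
      · rw [map_sub, pderiv_X_self, pderiv_X_of_ne (by simp), sub_zero]
      · rw [map_zero]
    | some i =>
      rw [substTA0_X_some, pderiv_X_of_ne (by simp), map_zero]
      refine PowerSeries.ext fun K => ?_
      rw [coeff_Dmap, renAmpS0, PowerSeries.coeff_map, pderiv_none_renameTS]
      simp

lemma pderiv_embedTA (p : AmpRing n) :
    MvPolynomial.pderiv none (embedTA p : AmpRing2 n) = embedTA (MvPolynomial.pderiv none p) := by
  have h := MvPolynomial.pderiv_rename (f := Option.map (some : Fin n → Option (Fin n)))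
    (Option.map_injective (fun _ _ h => Option.some_injective _ h)) none p
  simpa [embedTA] using h

end part4

section part5
open MvPolynomial

variable {n : ℕ}

/-- The evaluation `t ↦ s` on `ℂ[t,s,A]`. -/
def evTS (n : ℕ) : AmpRing2 n →+* AmpRing2 n :=
  (MvPolynomial.aeval (fun v : Option (Option (Fin n)) =>
    (MvPolynomial.X (Option.elim v (some none) some) : AmpRing2 n))).toRingHom

lemma evTS_embedTA (p : AmpRing n) : evTS n (embedTA p) = renameTS p := by
  have h : (evTS n).comp embedTA = (renameTS : AmpRing n →+* AmpRing2 n) := by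
    apply MvPolynomial.ringHom_ext
    · intro c; simp [evTS, embedTA, renameTS]
    · intro v; cases v <;> simp [evTS, embedTA, renameTS]
  exact RingHom.congr_fun h p

lemma evTS_renameTS (p : AmpRing n) : evTS n (renameTS p) = renameTS p := by
  have h : (evTS n).comp renameTS = (renameTS : AmpRing n →+* AmpRing2 n) := by
    apply MvPolynomial.ringHom_ext
    · intro c; simp [evTS, renameTS]
    · intro v; cases v <;> simp [evTS, renameTS]
  exact RingHom.congr_fun h p

/-- The substitution `t ↦ 0`, `A ↦ 𝒜(ε,s,A)`. -/
def sigmaH (Q : Fin n → EpsSeries (AmpRing n)) : AmpRing n →+* PowerSeries (AmpRing2 n) :=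
  MvPolynomial.eval₂Hom ((PowerSeries.C (R := AmpRing2 n)).comp MvPolynomial.C)
    (fun v : Option (Fin n) => Option.elim v 0 (fun i => renAmpS0 Q i))

lemma sigmaH_C (Q : Fin n → EpsSeries (AmpRing n)) (c : ℂ) :
    sigmaH Q (MvPolynomial.C c) = PowerSeries.C (MvPolynomial.C c) := by simp [sigmaH]

lemma sigmaH_X_none (Q : Fin n → EpsSeries (AmpRing n)) :
    sigmaH Q (MvPolynomial.X (none : Option (Fin n))) = 0 := by simp [sigmaH]

lemma sigmaH_X_some (Q : Fin n → EpsSeries (AmpRing n)) (i : Fin n) :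
    sigmaH Q (MvPolynomial.X (some i)) = renAmpS0 Q i := by simp [sigmaH]

lemma map_evTS_substTA0 (Q : Fin n → EpsSeries (AmpRing n)) (p : AmpRing n) :
    PowerSeries.map (evTS n) (substTA0 Q p) = sigmaH Q p := by
  have h : (PowerSeries.map (evTS n)).comp (substTA0 Q) = sigmaH Q := by
    apply MvPolynomial.ringHom_ext
    · intro c
      simp only [RingHom.coe_comp, Function.comp_apply]
      rw [substTA0_C, PowerSeries.map_C, sigmaH_C]
      congr 1
      simp [evTS]
    · intro v
      cases v with
      | none =>
        simp only [RingHom.coe_comp, Function.comp_apply]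
        rw [substTA0_X_none, PowerSeries.map_C, sigmaH_X_none]
        rw [map_sub]
        have h1 : evTS n (MvPolynomial.X none) = MvPolynomial.X (some none) := by simp [evTS]
        have h2 : evTS n (MvPolynomial.X (some none)) = MvPolynomial.X (some none) := by
          simp [evTS]
        rw [h1, h2, sub_self, map_zero]
      | some i =>
        simp only [RingHom.coe_comp, Function.comp_apply]
        rw [substTA0_X_some, sigmaH_X_some, renAmpS0]
        refine PowerSeries.ext fun K => ?_
        rw [PowerSeries.coeff_map, PowerSeries.coeff_map, evTS_renameTS]
  exact RingHom.congr_fun h p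

/-- The substitution `t ↦ 0`, `A ↦ A` on `ℂ[t,A]`. -/
def evT0 (n : ℕ) : AmpRing n →ₐ[ℂ] AmpRing n :=
  MvPolynomial.aeval
    (fun v : Option (Fin n) => Option.elim v (0 : AmpRing n) (fun i => MvPolynomial.X (some i)))

lemma sigmaH_evT0 (Q : Fin n → EpsSeries (AmpRing n)) (p : AmpRing n) :
    sigmaH Q (evT0 n p) = sigmaH Q p := by
  have h : (sigmaH Q).comp (evT0 n).toRingHom = sigmaH Q := by
    apply MvPolynomial.ringHom_ext
    · intro c
      simp only [RingHom.coe_comp, Function.comp_apply, AlgHom.toRingHom_eq_coe,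
        RingHom.coe_coe]
      rw [show (evT0 n) (MvPolynomial.C c) = MvPolynomial.C c by simp [evT0]]
    · intro v
      cases v with
      | none =>
        simp only [RingHom.coe_comp, Function.comp_apply, AlgHom.toRingHom_eq_coe,
          RingHom.coe_coe]
        rw [show (evT0 n) (MvPolynomial.X none) = 0 by simp [evT0], map_zero, sigmaH_X_none]
      | some i =>
        simp only [RingHom.coe_comp, Function.comp_apply, AlgHom.toRingHom_eq_coe,
          RingHom.coe_coe]
        rw [show (evT0 n) (MvPolynomial.X (some i)) = MvPolynomial.X (some i) by simp [evT0]]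
  exact RingHom.congr_fun h p

/-- `d^j/dt^j (t^k/k!)`-coefficients -/
def dcoef (j k : ℕ) : ℂ := if j ≤ k then (1 / ((k - j).factorial : ℂ)) else 0

lemma iter_pderiv_gMv (j : ℕ) :
    (fun p => MvPolynomial.pderiv (none : Option (Fin n)) p)^[j] (gMv n)
      = ∑ k : Fin n, MvPolynomial.C (dcoef j (k : ℕ)) * MvPolynomial.X (some k)
          * MvPolynomial.X (none : Option (Fin n)) ^ ((k : ℕ) - j) := by
  induction j with
  | zero =>
    rw [Function.iterate_zero, id_eq, gMv]
    apply Finset.sum_congr rfl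
    intro k _
    rw [dcoef, if_pos (Nat.zero_le _), Nat.sub_zero]
  | succ j ih =>
    rw [Function.iterate_succ_apply', ih, map_sum]
    apply Finset.sum_congr rfl
    intro k _
    rw [mul_assoc, pderiv_C_mul, pderiv_mul, pderiv_X_of_ne (by simp), zero_mul, zero_add,
      pderiv_pow, pderiv_X_self, mul_one]
    by_cases hjk : j < (k : ℕ)
    · have h1 : (k : ℕ) - j = ((k : ℕ) - (j + 1)) + 1 := by omega
      have h2 : (((k : ℕ) - j : ℕ) : AmpRing n)
          = MvPolynomial.C (((k : ℕ) - j : ℕ) : ℂ) := by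
        rw [map_natCast]
      rw [h2]
      have h3 : MvPolynomial.C (dcoef j (k:ℕ)) *
          (MvPolynomial.X (some k) * (MvPolynomial.C (((k : ℕ) - j : ℕ) : ℂ)
            * MvPolynomial.X (none : Option (Fin n)) ^ ((k:ℕ) - j - 1)))
          = MvPolynomial.C (dcoef j (k:ℕ) * (((k : ℕ) - j : ℕ) : ℂ)) * MvPolynomial.X (some k)
            * MvPolynomial.X (none : Option (Fin n)) ^ ((k:ℕ) - j - 1) := by
        rw [map_mul]; ring
      have h4 : (k : ℕ) - j - 1 = (k : ℕ) - (j + 1) := by omega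
      have hcoef : dcoef j (k:ℕ) * ((((k:ℕ) - j : ℕ)) : ℂ) = dcoef (j+1) (k:ℕ) := by
        rw [dcoef, dcoef, if_pos (by omega : j ≤ (k:ℕ)), if_pos (by omega : j+1 ≤ (k:ℕ))]
        have h5 : (k : ℕ) - j = ((k:ℕ) - (j + 1)) + 1 := by omega
        rw [h5, Nat.factorial_succ]
        have h6 : (((k:ℕ) - (j+1)).factorial : ℂ) ≠ 0 := by
          exact_mod_cast Nat.factorial_ne_zero _
        have h7 : ((((k:ℕ) - (j+1)) + 1 : ℕ) : ℂ) ≠ 0 := by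
          exact_mod_cast Nat.succ_ne_zero ((k:ℕ) - (j+1))
        push_cast at h7 ⊢
        field_simp
      rw [h3, h4, hcoef]
    · have h0 : (k : ℕ) - j = 0 := by omega
      rw [h0]
      have hd : dcoef (j+1) (k:ℕ) = 0 := by rw [dcoef, if_neg (by omega)]
      rw [hd]
      simp

lemma evT0_iter_pderiv_gMv (j : Fin n) :
    evT0 n ((fun p => MvPolynomial.pderiv (none : Option (Fin n)) p)^[(j : ℕ)] (gMv n))
      = MvPolynomial.X (some j) := by
  rw [iter_pderiv_gMv, map_sum, Finset.sum_eq_single j]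
  · rw [map_mul, map_mul]
    have e1 : ((j:ℕ) : ℕ) - (j:ℕ) = 0 := Nat.sub_self _
    rw [e1, pow_zero, map_one, mul_one]
    have e2 : dcoef (j:ℕ) (j:ℕ) = 1 := by
      rw [dcoef, if_pos le_rfl, Nat.sub_self]
      simp
    rw [e2]
    simp [evT0]
  · intro k _ hk
    rw [map_mul, map_mul, map_pow]
    rw [show (evT0 n) (MvPolynomial.X (none : Option (Fin n))) = 0 by simp [evT0]]
    by_cases hjk : (j : ℕ) ≤ (k : ℕ)
    · have : (k : ℕ) - (j : ℕ) ≠ 0 := by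
        have : (j:ℕ) ≠ (k:ℕ) := fun h => hk (Fin.ext h.symm)
        omega
      rw [zero_pow this, mul_zero]
    · have : dcoef (j:ℕ) (k:ℕ) = 0 := by rw [dcoef, if_neg hjk]
      simp [this]
  · intro h
    exact absurd (Finset.mem_univ j) h

lemma OE_pderiv (p : AmpRing2 n) :
    Polynomial.derivative (MvPolynomial.optionEquivLeft ℂ (Option (Fin n)) p)
      = MvPolynomial.optionEquivLeft ℂ (Option (Fin n)) (MvPolynomial.pderiv none p) := by
  induction p using MvPolynomial.induction_on with
  | C c => rw [optionEquivLeft_C, pderiv_C, map_zero, Polynomial.derivative_C]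
  | add p q hp hq => simp only [map_add, hp, hq]
  | mul_X p v ih =>
    cases v with
    | none =>
      have hR : (optionEquivLeft ℂ (Option (Fin n))) ((pderiv none) (p * MvPolynomial.X none))
          = (optionEquivLeft ℂ (Option (Fin n))) ((pderiv none) p) * Polynomial.X
            + (optionEquivLeft ℂ (Option (Fin n))) p := by
        rw [pderiv_mul, pderiv_X_self, mul_one, map_add, map_mul, optionEquivLeft_X_none]
      rw [hR, map_mul, optionEquivLeft_X_none, Polynomial.derivative_mul,
        Polynomial.derivative_X, mul_one, ih]
    | some w =>
      have hR : (optionEquivLeft ℂ (Option (Fin n)))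
            ((pderiv none) (p * MvPolynomial.X (some w)))
          = (optionEquivLeft ℂ (Option (Fin n))) ((pderiv none) p)
            * Polynomial.C (MvPolynomial.X w) := by
        rw [pderiv_mul, pderiv_X_of_ne (by simp), mul_zero, add_zero, map_mul,
          optionEquivLeft_X_some]
      rw [hR, map_mul, optionEquivLeft_X_some, Polynomial.derivative_mul,
        Polynomial.derivative_C, mul_zero, add_zero, ih]

lemma eq_zero_of_pderiv_add_C_mul {c : ℂ} (hc : c ≠ 0) (p : AmpRing2 n)
    (h : MvPolynomial.pderiv none p + MvPolynomial.C c * p = 0) : p = 0 := by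
  by_contra hp
  have hq0 : MvPolynomial.optionEquivLeft ℂ (Option (Fin n)) p ≠ 0 := by
    intro h0
    apply hp
    have h1 := (MvPolynomial.optionEquivLeft ℂ (Option (Fin n))).symm_apply_apply p
    rw [h0, map_zero] at h1
    exact h1.symm
  have hq : Polynomial.derivative (MvPolynomial.optionEquivLeft ℂ (Option (Fin n)) p)
      + Polynomial.C (MvPolynomial.C c)
        * (MvPolynomial.optionEquivLeft ℂ (Option (Fin n)) p) = 0 := by
    have h2 := congrArg (MvPolynomial.optionEquivLeft ℂ (Option (Fin n))) h
    rw [map_add, map_mul, map_zero, optionEquivLeft_C] at h2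
    rw [OE_pderiv]
    exact h2
  set N := (MvPolynomial.optionEquivLeft ℂ (Option (Fin n)) p).natDegree with hN
  have h1 := congrArg (fun r => Polynomial.coeff r N) hq
  simp only [Polynomial.coeff_add, Polynomial.coeff_derivative, Polynomial.coeff_C_mul,
    Polynomial.coeff_zero] at h1
  rw [Polynomial.coeff_eq_zero_of_natDegree_lt (by omega : N < N + 1), zero_mul, zero_add] at h1
  rcases mul_eq_zero.mp h1 with h2 | h2
  · exact hc (by simpa using h2)
  · exact hq0 (Polynomial.leadingCoeff_eq_zero.mp h2)

lemma OE_rename_some (a : MvPolynomial (Option (Fin n)) ℂ) :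
    MvPolynomial.optionEquivLeft ℂ (Option (Fin n)) (MvPolynomial.rename some a)
      = Polynomial.C a := by
  induction a using MvPolynomial.induction_on with
  | C c => rw [rename_C, optionEquivLeft_C]
  | add p q hp hq => rw [map_add, map_add, hp, hq, map_add]
  | mul_X p v ih => rw [map_mul, map_mul, rename_X, optionEquivLeft_X_some, ih, ← map_mul]

lemma evTS_rename_some (a : MvPolynomial (Option (Fin n)) ℂ) :
    evTS n (MvPolynomial.rename some a) = MvPolynomial.rename some a := by
  induction a using MvPolynomial.induction_on with
  | C c => rw [rename_C]; simp [evTS]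
  | add p q hp hq => rw [map_add, map_add, hp, hq]
  | mul_X p v ih =>
    rw [map_mul, map_mul, ih, rename_X]
    congr 1
    simp [evTS]

lemma evTS_eq_of_pderiv_eq_zero (p : AmpRing2 n) (h : MvPolynomial.pderiv none p = 0) :
    evTS n p = p := by
  have hq : Polynomial.derivative (MvPolynomial.optionEquivLeft ℂ (Option (Fin n)) p) = 0 := by
    rw [OE_pderiv, h, map_zero]
  have hC : MvPolynomial.optionEquivLeft ℂ (Option (Fin n)) p
      = Polynomial.C ((MvPolynomial.optionEquivLeft ℂ (Option (Fin n)) p).coeff 0) :=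
    Polynomial.eq_C_of_derivative_eq_zero hq
  have hp : p = MvPolynomial.rename some
      ((MvPolynomial.optionEquivLeft ℂ (Option (Fin n)) p).coeff 0) := by
    apply (MvPolynomial.optionEquivLeft ℂ (Option (Fin n))).injective
    rw [OE_rename_some, ← hC]
  rw [hp, evTS_rename_some]

end part5

section part6
open MvPolynomial

variable {n : ℕ}

lemma Pc_eq_modeExtract (Q : Fin n → EpsSeries (AmpRing n)) (j : Fin n) (m : ℤ) :
    Pc Q j m = modeExtract (Q j) m := rfl

lemma substRingHom_mkD (φ : AmpRing n →+* PowerSeries (AmpRing2 n))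
    (hφD : ∀ p, Dmap none (φ p) = φ (MvPolynomial.pderiv none p))
    (f : PowerSeries (AmpRing n)) :
    substRingHom φ (PowerSeries.mk fun k =>
        MvPolynomial.pderiv none (PowerSeries.coeff k f))
      = PowerSeries.mk fun K =>
          MvPolynomial.pderiv none (PowerSeries.coeff K (substRingHom φ f)) := by
  refine PowerSeries.ext fun K => ?_
  rw [coeff_substRingHom, PowerSeries.coeff_mk, coeff_substRingHom, map_sum]
  apply Finset.sum_congr rfl
  intro k _
  rw [PowerSeries.coeff_mk]
  have h := congrArg (PowerSeries.coeff (K - k)) (hφD (PowerSeries.coeff k f))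
  rw [coeff_Dmap] at h
  exact h.symm

/-- transport of the mode-by-mode ODE along a coefficient substitution -/
lemma ode_transport
    (V : Fin n → MvPolynomial (Fin n) (Polynomial (AddMonoidAlgebra ℂ ℤ)))
    (Q : Fin n → EpsSeries (AmpRing n)) (hQ : IsNilpotentSecularFamily V Q)
    (φ : AmpRing n →+* PowerSeries (AmpRing2 n))
    (hφC : ∀ c : ℂ, φ (MvPolynomial.C c) = PowerSeries.C (MvPolynomial.C c))
    (hφD : ∀ p, Dmap none (φ p) = φ (MvPolynomial.pderiv none p))
    (j : Fin n) (m : ℤ) :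
    (PowerSeries.mk fun K => MvPolynomial.pderiv none
        (PowerSeries.coeff K (substRingHom φ (Pc Q j m))))
      + PowerSeries.C (MvPolynomial.C (Complex.I * (m : ℂ)))
          * substRingHom φ (Pc Q j m)
      = (if h : (j : ℕ) + 1 < n then substRingHom φ (Pc Q ⟨(j : ℕ) + 1, h⟩ m) else 0)
        + modeExtract (PowerSeries.X
            * VEval (AmpRing2 n) (V j) (fun i => phiHom φ (Q i))) m := by
  have hφ' : ∀ c : ℂ, φ (algebraMap ℂ (AmpRing n) c)
      = PowerSeries.C (algebraMap ℂ (AmpRing2 n) c) := by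
    intro c
    rw [MvPolynomial.algebraMap_eq, MvPolynomial.algebraMap_eq]
    exact hφC c
  have h0 := congrArg (substRingHom φ) (hQ.ode j m)
  rw [map_add, map_add, map_mul] at h0
  -- term 1
  have e1 : (PowerSeries.mk fun k => MvPolynomial.pderiv none
        ((PowerSeries.coeff (R := ModeRing (AmpRing n)) k (Q j)).coeff m))
      = PowerSeries.mk fun k =>
          MvPolynomial.pderiv none (PowerSeries.coeff k (Pc Q j m)) := by
    refine PowerSeries.ext fun k => ?_
    rw [PowerSeries.coeff_mk, PowerSeries.coeff_mk, Pc, PowerSeries.coeff_mk]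
  rw [e1, substRingHom_mkD φ hφD] at h0
  -- term 2
  rw [substRingHom_C, hφC] at h0
  -- term 3
  have e3 : substRingHom φ (PcNext Q j m)
      = (if h : (j : ℕ) + 1 < n then substRingHom φ (Pc Q ⟨(j : ℕ) + 1, h⟩ m) else 0) := by
    rw [PcNext, apply_dite (substRingHom φ), map_zero]
  rw [e3] at h0
  -- term 4
  have e4 : substRingHom φ (PowerSeries.mk fun k =>
        (PowerSeries.coeff (R := ModeRing (AmpRing n)) k
          (PowerSeries.X * VEval (AmpRing n) (V j) Q)).coeff m)
      = modeExtract (PowerSeries.X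
          * VEval (AmpRing2 n) (V j) (fun i => phiHom φ (Q i))) m := by
    have e5 : (PowerSeries.mk fun k =>
          (PowerSeries.coeff (R := ModeRing (AmpRing n)) k
            (PowerSeries.X * VEval (AmpRing n) (V j) Q)).coeff m)
        = modeExtract (PowerSeries.X * VEval (AmpRing n) (V j) Q) m := rfl
    rw [e5, ← modeExtract_phiHom]
    congr 1
    rw [map_mul]
    rw [show phiHom φ PowerSeries.X = PowerSeries.X from substRingHom_X _]
    rw [ringHom_VEval (phiHom φ) (phiHom_zEval φ hφ') (substRingHom_X _)]
  rw [e4] at h0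
  exact h0

lemma ode_transport_coeff
    (V : Fin n → MvPolynomial (Fin n) (Polynomial (AddMonoidAlgebra ℂ ℤ)))
    (Q : Fin n → EpsSeries (AmpRing n)) (hQ : IsNilpotentSecularFamily V Q)
    (φ : AmpRing n →+* PowerSeries (AmpRing2 n))
    (hφC : ∀ c : ℂ, φ (MvPolynomial.C c) = PowerSeries.C (MvPolynomial.C c))
    (hφD : ∀ p, Dmap none (φ p) = φ (MvPolynomial.pderiv none p))
    (K : ℕ) (j : Fin n) (m : ℤ) :
    MvPolynomial.pderiv none (PowerSeries.coeff K (substRingHom φ (Pc Q j m)))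
      + MvPolynomial.C (Complex.I * (m : ℂ))
          * PowerSeries.coeff K (substRingHom φ (Pc Q j m))
      = (if h : (j : ℕ) + 1 < n then
            PowerSeries.coeff K (substRingHom φ (Pc Q ⟨(j : ℕ) + 1, h⟩ m)) else 0)
        + (PowerSeries.coeff (R := ModeRing (AmpRing2 n)) K (PowerSeries.X
            * VEval (AmpRing2 n) (V j) (fun i => phiHom φ (Q i)))).coeff m := by
  have h0 := congrArg (PowerSeries.coeff (R := AmpRing2 n) K)
    (ode_transport V Q hQ φ hφC hφD j m)
  rw [map_add, map_add, PowerSeries.coeff_mk, PowerSeries.coeff_C_mul,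
    coeff_modeExtract, apply_dite (PowerSeries.coeff (R := AmpRing2 n) K), map_zero] at h0
  exact h0

/-- the two substitutions used in the theorem, with their hypotheses -/
lemma hphiC_L :
    ∀ c : ℂ, ((PowerSeries.C (R := AmpRing2 n)).comp embedTA) (MvPolynomial.C c)
      = PowerSeries.C (MvPolynomial.C c) := by
  intro c
  simp only [RingHom.coe_comp, Function.comp_apply]
  congr 1
  simp [embedTA]

lemma hphiD_L :
    ∀ p : AmpRing n, Dmap none (((PowerSeries.C (R := AmpRing2 n)).comp embedTA) p)
      = ((PowerSeries.C (R := AmpRing2 n)).comp embedTA) (MvPolynomial.pderiv none p) := by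
  intro p
  refine PowerSeries.ext fun K => ?_
  rw [coeff_Dmap]
  simp only [RingHom.coe_comp, Function.comp_apply]
  rw [PowerSeries.coeff_C, PowerSeries.coeff_C]
  split
  · exact pderiv_embedTA p
  · exact map_zero _

lemma hphiD_S (Q : Fin n → EpsSeries (AmpRing n)) :
    ∀ p : AmpRing n, Dmap none (substTA0 Q p) = substTA0 Q (MvPolynomial.pderiv none p) :=
  Dmap_substTA0 Q

end part6

section part7
open MvPolynomial

variable {n : ℕ}

/-- `φL`: the plain embedding `ℂ[t,A] → ℂ[t,s,A][[ε]]`. -/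
def phiL (n : ℕ) : AmpRing n →+* PowerSeries (AmpRing2 n) :=
  (PowerSeries.C (R := AmpRing2 n)).comp embedTA

lemma hphiC_L' : ∀ c : ℂ, phiL n (MvPolynomial.C c)
    = PowerSeries.C (MvPolynomial.C c) := by
  intro c
  have : (embedTA (MvPolynomial.C c) : AmpRing2 n) = MvPolynomial.C c := by simp [embedTA]
  simp only [phiL, RingHom.coe_comp, Function.comp_apply, this]

lemma hphiD_L' : ∀ p : AmpRing n, Dmap none (phiL n p) = phiL n (MvPolynomial.pderiv none p) := by
  intro p
  refine PowerSeries.ext fun K => ?_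
  rw [coeff_Dmap]
  simp only [phiL, RingHom.coe_comp, Function.comp_apply]
  rw [PowerSeries.coeff_C, PowerSeries.coeff_C]
  split
  · exact pderiv_embedTA p
  · exact map_zero _

lemma coeff_phiHom_mode {R R' : Type} [CommRing R] [CommRing R']
    (φ : R →+* PowerSeries R') (u : EpsSeries R) (k : ℕ) (m : ℤ) :
    (PowerSeries.coeff (R := ModeRing R') k (phiHom φ u)).coeff m
      = PowerSeries.coeff (R := R') k (substRingHom φ (modeExtract u m)) := by
  have h := congrArg (PowerSeries.coeff (R := R') k) (modeExtract_phiHom φ u m)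
  rw [coeff_modeExtract] at h
  exact h

lemma coeff_VEval_congr {R : Type} [CommRing R] [Algebra ℂ R]
    (V : MvPolynomial (Fin n) (Polynomial (AddMonoidAlgebra ℂ ℤ)))
    (y y' : Fin n → EpsSeries R) (d : ℕ)
    (h : ∀ i : Fin n, ∀ k ≤ d,
      PowerSeries.coeff (R := ModeRing R) k (y i) = PowerSeries.coeff (R := ModeRing R) k (y' i)) :
    ∀ d' ≤ d, PowerSeries.coeff (R := ModeRing R) d' (VEval R V y)
      = PowerSeries.coeff (R := ModeRing R) d' (VEval R V y') := by
  unfold VEval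
  induction V using MvPolynomial.induction_on with
  | C a => intro d' _; rw [MvPolynomial.eval₂_C, MvPolynomial.eval₂_C]
  | add p q hp hq =>
    intro d' hd'
    rw [MvPolynomial.eval₂_add, MvPolynomial.eval₂_add, map_add, map_add,
      hp d' hd', hq d' hd']
  | mul_X p i hp =>
    intro d' hd'
    rw [MvPolynomial.eval₂_mul, MvPolynomial.eval₂_mul, MvPolynomial.eval₂_X,
      MvPolynomial.eval₂_X, PowerSeries.coeff_mul, PowerSeries.coeff_mul]
    apply Finset.sum_congr rfl
    intro x hx
    rw [Finset.HasAntidiagonal.mem_antidiagonal] at hx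
    rw [hp x.1 (by omega), h i x.2 (by omega)]

lemma boundary_L (Q : Fin n → EpsSeries (AmpRing n)) (K : ℕ) (j : Fin n) :
    evTS n (PowerSeries.coeff (R := AmpRing2 n) K (substRingHom (phiL n) (Pc Q j 0)))
      = renameTS (PowerSeries.coeff (R := AmpRing n) K (Pc Q j 0)) := by
  rw [phiL, substRingHom_C_comp, PowerSeries.coeff_map, evTS_embedTA]

lemma boundary_S (V : Fin n → MvPolynomial (Fin n) (Polynomial (AddMonoidAlgebra ℂ ℤ)))
    (Q : Fin n → EpsSeries (AmpRing n)) (hQ : IsNilpotentSecularFamily V Q)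
    (K : ℕ) (j : Fin n) :
    evTS n (PowerSeries.coeff (R := AmpRing2 n) K (substRingHom (substTA0 Q) (Pc Q j 0)))
      = renameTS (PowerSeries.coeff (R := AmpRing n) K (Pc Q j 0)) := by
  rw [coeff_substRingHom, map_sum, Finset.sum_eq_single 0]
  · have hc0 : PowerSeries.coeff (R := AmpRing n) 0 (Pc Q j 0)
        = (fun p => MvPolynomial.pderiv none p)^[(j : ℕ)] (gMv n) := by
      rw [Pc, PowerSeries.coeff_mk, hQ.coeff_zero j, AddMonoidAlgebra.coeff_single, Finsupp.single_eq_same]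
    rw [hc0, ← PowerSeries.coeff_map, map_evTS_substTA0, ← sigmaH_evT0]
    rw [show (evT0 n) ((fun p => MvPolynomial.pderiv none p)^[(j : ℕ)] (gMv n))
        = MvPolynomial.X (some j) from evT0_iter_pderiv_gMv j]
    rw [sigmaH_X_some, renAmpS0, PowerSeries.coeff_map, Nat.sub_zero]
  · intro k hk hk0
    have hPc : PowerSeries.coeff (R := AmpRing n) k (Pc Q j 0)
        = (PowerSeries.coeff (R := ModeRing (AmpRing n)) k (Q j)).coeff 0 := by
      rw [Pc, PowerSeries.coeff_mk]
    rw [← PowerSeries.coeff_map, map_evTS_substTA0, ← sigmaH_evT0, hPc]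
    rw [show (evT0 n) ((PowerSeries.coeff (R := ModeRing (AmpRing n)) k (Q j)).coeff 0) = 0 from
      hQ.resonant_vanish j k (Nat.one_le_iff_ne_zero.mpr hk0)]
    rw [map_zero, map_zero]
  · intro h
    exact absurd (Finset.self_mem_range_succ K) (by simpa using h)

end part7

end NFR

/-- functional relation for secular coefficients, nilpotent case:
`P_{j,m}(ε, t, A) = P_{j,m}(ε, t - s, 𝒜(ε, s, A))` as formal power series in `ε` with
coefficients in `ℂ[t,s,A]`, where `𝒜_j = P_{j,0}`. -/
theorem nilpotent_functional_relation {n : ℕ} (hn : 0 < n)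
    (V : Fin n → MvPolynomial (Fin n) (Polynomial (AddMonoidAlgebra ℂ ℤ)))
    (Q : Fin n → EpsSeries (AmpRing n))
    (hQ : IsNilpotentSecularFamily V Q) :
    ∀ (j : Fin n) (m : ℤ),
      PowerSeries.map embedTA (Pc Q j m) = substSeries (substTA0 Q) (Pc Q j m) := by
  
  classical
  have key : ∀ K : ℕ, ∀ (j : Fin n) (m : ℤ),
      PowerSeries.coeff (R := AmpRing2 n) K (NFR.substRingHom (NFR.phiL n) (Pc Q j m))
        = PowerSeries.coeff (R := AmpRing2 n) K (NFR.substRingHom (substTA0 Q) (Pc Q j m)) := by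
    intro K
    induction K using Nat.strong_induction_on with
    | _ K IH =>
    -- the nonlinear terms agree at order `K`
    have hW : ∀ (j : Fin n) (m : ℤ),
        (PowerSeries.coeff (R := ModeRing (AmpRing2 n)) K (PowerSeries.X
          * VEval (AmpRing2 n) (V j) (fun i => NFR.phiHom (NFR.phiL n) (Q i)))).coeff m
        = (PowerSeries.coeff (R := ModeRing (AmpRing2 n)) K (PowerSeries.X
          * VEval (AmpRing2 n) (V j) (fun i => NFR.phiHom (substTA0 Q) (Q i)))).coeff m := by
      intro j m
      rcases K with _ | K'
      · rw [mul_comm, PowerSeries.coeff_zero_mul_X, mul_comm, PowerSeries.coeff_zero_mul_X]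
      · rw [PowerSeries.coeff_succ_X_mul, PowerSeries.coeff_succ_X_mul]
        have hcong := NFR.coeff_VEval_congr (V j)
          (fun i => NFR.phiHom (NFR.phiL n) (Q i))
          (fun i => NFR.phiHom (substTA0 Q) (Q i)) K' ?_ K' le_rfl
        · rw [hcong]
        · intro i k hk
          refine AddMonoidAlgebra.ext (Finsupp.ext fun m' => ?_)
          rw [NFR.coeff_phiHom_mode, NFR.coeff_phiHom_mode]
          exact IH k (by omega) i m'
    -- one step of the downward induction on `j`
    have step : ∀ j : Fin n,
        (∀ (h : (j : ℕ) + 1 < n) (m' : ℤ),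
          PowerSeries.coeff (R := AmpRing2 n) K
              (NFR.substRingHom (NFR.phiL n) (Pc Q ⟨(j : ℕ) + 1, h⟩ m'))
            = PowerSeries.coeff (R := AmpRing2 n) K
              (NFR.substRingHom (substTA0 Q) (Pc Q ⟨(j : ℕ) + 1, h⟩ m'))) →
        ∀ m : ℤ,
          PowerSeries.coeff (R := AmpRing2 n) K (NFR.substRingHom (NFR.phiL n) (Pc Q j m))
            = PowerSeries.coeff (R := AmpRing2 n) K
                (NFR.substRingHom (substTA0 Q) (Pc Q j m)) := by
      intro j hnext m
      have odeL := NFR.ode_transport_coeff V Q hQ (NFR.phiL n)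
        NFR.hphiC_L' NFR.hphiD_L' K j m
      have odeS := NFR.ode_transport_coeff V Q hQ (substTA0 Q)
        (NFR.substTA0_C Q) (NFR.hphiD_S Q) K j m
      have hN : (if h : (j : ℕ) + 1 < n then
            PowerSeries.coeff (R := AmpRing2 n) K
              (NFR.substRingHom (NFR.phiL n) (Pc Q ⟨(j : ℕ) + 1, h⟩ m)) else 0)
          = (if h : (j : ℕ) + 1 < n then
            PowerSeries.coeff (R := AmpRing2 n) K
              (NFR.substRingHom (substTA0 Q) (Pc Q ⟨(j : ℕ) + 1, h⟩ m)) else 0) := by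
        by_cases h : (j : ℕ) + 1 < n
        · rw [dif_pos h, dif_pos h]
          exact hnext h m
        · rw [dif_neg h, dif_neg h]
      have heq : MvPolynomial.pderiv none
            (PowerSeries.coeff (R := AmpRing2 n) K (NFR.substRingHom (NFR.phiL n) (Pc Q j m)))
          + MvPolynomial.C (Complex.I * (m : ℂ))
            * PowerSeries.coeff (R := AmpRing2 n) K (NFR.substRingHom (NFR.phiL n) (Pc Q j m))
          = MvPolynomial.pderiv none
            (PowerSeries.coeff (R := AmpRing2 n) K (NFR.substRingHom (substTA0 Q) (Pc Q j m)))
          + MvPolynomial.C (Complex.I * (m : ℂ))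
            * PowerSeries.coeff (R := AmpRing2 n) K
                (NFR.substRingHom (substTA0 Q) (Pc Q j m)) := by
        rw [odeL, odeS, hN, hW j m]
      have hd : MvPolynomial.pderiv none
            (PowerSeries.coeff (R := AmpRing2 n) K (NFR.substRingHom (NFR.phiL n) (Pc Q j m))
              - PowerSeries.coeff (R := AmpRing2 n) K (NFR.substRingHom (substTA0 Q) (Pc Q j m)))
          + MvPolynomial.C (Complex.I * (m : ℂ))
            * (PowerSeries.coeff (R := AmpRing2 n) K (NFR.substRingHom (NFR.phiL n) (Pc Q j m))
              - PowerSeries.coeff (R := AmpRing2 n) K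
                  (NFR.substRingHom (substTA0 Q) (Pc Q j m))) = 0 := by
        rw [map_sub, mul_sub]
        linear_combination heq
      rcases eq_or_ne m 0 with rfl | hm
      · have hI : Complex.I * ((0 : ℤ) : ℂ) = 0 := by norm_num
        rw [hI, map_zero, zero_mul, add_zero] at hd
        have hE := NFR.evTS_eq_of_pderiv_eq_zero _ hd
        have hB : NFR.evTS n
            (PowerSeries.coeff (R := AmpRing2 n) K (NFR.substRingHom (NFR.phiL n) (Pc Q j 0))
              - PowerSeries.coeff (R := AmpRing2 n) K
                  (NFR.substRingHom (substTA0 Q) (Pc Q j 0))) = 0 := by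
          rw [map_sub, NFR.boundary_L, NFR.boundary_S V Q hQ, sub_self]
        exact sub_eq_zero.mp (hE.symm.trans hB)
      · have hc : Complex.I * (m : ℂ) ≠ 0 :=
          mul_ne_zero Complex.I_ne_zero (Int.cast_ne_zero.mpr hm)
        exact sub_eq_zero.mp (NFR.eq_zero_of_pderiv_add_C_mul hc _ hd)
    have main : ∀ r : ℕ, ∀ j : Fin n, n - (j : ℕ) - 1 ≤ r → ∀ m : ℤ,
        PowerSeries.coeff (R := AmpRing2 n) K (NFR.substRingHom (NFR.phiL n) (Pc Q j m))
          = PowerSeries.coeff (R := AmpRing2 n) K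
              (NFR.substRingHom (substTA0 Q) (Pc Q j m)) := by
      intro r
      induction r with
      | zero =>
        intro j hj m
        exact step j (fun h _ => absurd h (by omega)) m
      | succ r ihr =>
        intro j hj m
        refine step j (fun h m' => ihr ⟨(j : ℕ) + 1, h⟩ ?_ m') m
        show n - ((j : ℕ) + 1) - 1 ≤ r
        omega
    intro j m
    exact main n j (by omega) m
  intro j m
  refine PowerSeries.ext fun K => ?_
  have h := key K j m
  rw [show NFR.substRingHom (NFR.phiL n) (Pc Q j m)
      = PowerSeries.map embedTA (Pc Q j m) from NFR.substRingHom_C_comp _ _] at h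
  rw [show NFR.substRingHom (substTA0 Q) (Pc Q j m)
      = substSeries (substTA0 Q) (Pc Q j m) from rfl] at h
  exact h


end
end

section
/- Let g_k be the polynomials defined by g_0(u) = 1 and g_k(u) = (u / (2·k!)) · Π_{i=1}^{k−1} ((u + k)/2 − i) for k ≥ 1. Then for every u ∈ ℝ and every ζ ∈ ℝ with |ζ| < 1, the series Σ_{k=0}^{∞} g_k(u)·(2ζ)^k converges absolutely and Σ_{k=0}^{∞} g_k(u)·(2ζ)^k = (√(1+ζ²) + ζ)^u. -/
noncomputable section

open Polynomial

/-- The polynomials `g_k ∈ ℝ[u]`: `g_0(u) = 1` and, for `k ≥ 1`,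
`g_k(u) = (u / (2·k!)) · Π_{i=1}^{k-1} ((u + k)/2 - i)`. -/
def g : ℕ → Polynomial ℝ
  | 0 => 1
  | (k + 1) =>
      Polynomial.C (1 / (2 * ((k + 1).factorial : ℝ))) * Polynomial.X *
        ∏ i ∈ Finset.range k,
          (Polynomial.C (1 / 2 : ℝ) * (Polynomial.X + Polynomial.C ((k + 1 : ℕ) : ℝ))
            - Polynomial.C ((i + 1 : ℕ) : ℝ))

def aCoef (u : ℝ) (k : ℕ) : ℝ := (g k).eval u * 2 ^ k

lemma aCoef_zero (u : ℝ) : aCoef u 0 = 1 := by simp [aCoef, g]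

lemma aCoef_one (u : ℝ) : aCoef u 1 = u := by
  simp [aCoef, g]
  ring

lemma g_eval (u : ℝ) (k : ℕ) : (g (k+1)).eval u =
    (1 / (2 * ((k + 1).factorial : ℝ))) * u *
      ∏ i ∈ Finset.range k, ((u + ((k+1:ℕ) : ℝ))/2 - ((i+1:ℕ) : ℝ)) := by
  simp only [g, eval_mul, eval_C, eval_X, eval_prod, eval_sub, eval_add]
  push_cast
  have h : (∏ x ∈ Finset.range k, (1/2*(u+((k:ℝ)+1)) - ((x:ℝ)+1)))
      = ∏ x ∈ Finset.range k, ((u+((k:ℝ)+1))/2 - ((x:ℝ)+1)) :=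
    Finset.prod_congr rfl fun i _ => by ring
  rw [h]

lemma aCoef_rec (u : ℝ) (k : ℕ) :
    ((k:ℝ)+1) * ((k:ℝ)+2) * aCoef u (k+2) = (u^2 - (k:ℝ)^2) * aCoef u k := by
  cases k with
  | zero =>
    simp only [aCoef, Nat.cast_zero]
    rw [show (0:ℕ)+2 = 1+1 from rfl, g_eval]
    norm_num [Finset.prod_range_succ, g, Nat.factorial]
    ring
  | succ j =>
    have h1 : ((j+1).factorial : ℝ) ≠ 0 := Nat.cast_ne_zero.mpr (Nat.factorial_ne_zero _)
    have e1 := g_eval u (j+2)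
    have e0 := g_eval u j
    rw [Finset.prod_range_succ, Finset.prod_range_succ'] at e1
    have hp : (∏ i ∈ Finset.range j, ((u + (((j+2)+1:ℕ)):ℝ)/2 - (((i+1)+1:ℕ):ℝ)))
        = ∏ i ∈ Finset.range j, ((u + ((j+1:ℕ):ℝ))/2 - ((i+1:ℕ):ℝ)) :=
      Finset.prod_congr rfl fun i _ => by push_cast; ring
    rw [hp] at e1
    have hfac : (((j+2)+1).factorial : ℝ)
        = (((j:ℝ)+3) * ((j:ℝ)+2)) * ((j+1).factorial : ℝ) := by
      simp [Nat.factorial_succ]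
      push_cast
      ring
    push_cast
    show ((j:ℝ)+1+1) * ((j:ℝ)+1+2) * aCoef u ((j+2)+1) = (u^2 - ((j:ℝ)+1)^2) * aCoef u (j+1)
    rw [aCoef, aCoef, e1, e0, hfac]
    push_cast
    field_simp
    ring

lemma aCoef_abs_le (u : ℝ) (k : ℕ) :
    |aCoef u k| ≤ (max 1 |u|) * Real.exp (u^2) := by
  set M := max 1 |u| with hM
  have hM0 : (0:ℝ) < M := lt_of_lt_of_le one_pos (le_max_left _ _)
  set c : ℕ → ℝ := fun j => 1 + u^2/(((j:ℝ)+1)*((j:ℝ)+2)) with hc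
  have hc1 : ∀ j, 1 ≤ c j := fun j => le_add_of_nonneg_right (by positivity)
  set b : ℕ → ℝ := fun k => M * ∏ j ∈ Finset.range k, c j with hb
  have hb0 : ∀ k, 0 < b k :=
    fun k => mul_pos hM0 (Finset.prod_pos fun j _ => lt_of_lt_of_le one_pos (hc1 j))
  have hbsucc : ∀ k, b (k+1) = b k * c k := fun k => by
    simp only [hb, Finset.prod_range_succ, mul_assoc]
  have hbmono : ∀ k, b k ≤ b (k+1) := fun k => by
    rw [hbsucc]; nlinarith [hb0 k, hc1 k]
  have step : ∀ k, |aCoef u (k+2)| ≤ c k * |aCoef u k| := by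
    intro k
    have h12 : (0:ℝ) < ((k:ℝ)+1) * ((k:ℝ)+2) := by positivity
    have heq : aCoef u (k+2) = (u^2 - (k:ℝ)^2)/(((k:ℝ)+1)*((k:ℝ)+2)) * aCoef u k := by
      field_simp
      linarith [aCoef_rec u k]
    rw [heq, abs_mul]
    apply mul_le_mul_of_nonneg_right _ (abs_nonneg _)
    rw [abs_div, abs_of_pos h12, div_le_iff₀ h12]
    have habs : |u^2 - (k:ℝ)^2| ≤ u^2 + (k:ℝ)^2 :=
      abs_le.mpr ⟨by nlinarith [sq_nonneg u, sq_nonneg ((k:ℝ))], by nlinarith [sq_nonneg u, sq_nonneg ((k:ℝ))]⟩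
    have hck : c k * (((k:ℝ)+1)*((k:ℝ)+2)) = ((k:ℝ)+1)*((k:ℝ)+2) + u^2 := by
      simp only [hc]
      rw [add_mul, div_mul_cancel₀ _ h12.ne']
      ring
    rw [hck]
    nlinarith [sq_nonneg ((k:ℝ))]
  have main : ∀ k, |aCoef u k| ≤ b k ∧ |aCoef u (k+1)| ≤ b (k+1) := by
    intro k
    induction k with
    | zero =>
      constructor
      · rw [aCoef_zero, abs_one]
        calc (1:ℝ) ≤ M := le_max_left _ _
          _ = b 0 := by simp [hb]
      · calc |aCoef u 1| = |u| := by rw [aCoef_one]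
          _ ≤ M := le_max_right _ _
          _ = b 0 := by simp [hb]
          _ ≤ b 1 := hbmono 0
    | succ n ih =>
      refine ⟨ih.2, ?_⟩
      calc |aCoef u (n+2)| ≤ c n * |aCoef u n| := step n
        _ ≤ c n * b n := by
            apply mul_le_mul_of_nonneg_left ih.1 (le_trans zero_le_one (hc1 n))
        _ = b (n+1) := by rw [hbsucc]; ring
        _ ≤ b (n+2) := hbmono _
  have hbk : b k ≤ M * Real.exp (u^2) := by
    apply mul_le_mul_of_nonneg_left _ hM0.le
    calc (∏ j ∈ Finset.range k, c j)
        ≤ ∏ j ∈ Finset.range k, Real.exp (u^2/(((j:ℝ)+1)*((j:ℝ)+2))) := by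
          apply Finset.prod_le_prod (fun j _ => le_trans zero_le_one (hc1 j))
          intro j _
          calc c j = u^2/(((j:ℝ)+1)*((j:ℝ)+2)) + 1 := by rw [hc]; ring
            _ ≤ Real.exp (u^2/(((j:ℝ)+1)*((j:ℝ)+2))) := Real.add_one_le_exp _
      _ = Real.exp (∑ j ∈ Finset.range k, u^2/(((j:ℝ)+1)*((j:ℝ)+2))) := (Real.exp_sum _ _).symm
      _ ≤ Real.exp (u^2) := by
          apply Real.exp_le_exp.mpr
          have tele := Finset.sum_range_sub' (fun j => 1/((j:ℝ)+1)) k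
          push_cast at tele
          have hsum : (∑ j ∈ Finset.range k, u^2/(((j:ℝ)+1)*((j:ℝ)+2)))
              = u^2 * ∑ j ∈ Finset.range k, (1/((j:ℝ)+1) - 1/((j:ℝ)+1+1)) := by
            rw [Finset.mul_sum]
            apply Finset.sum_congr rfl
            intro j _
            have hj1 : ((j:ℝ)+1) ≠ 0 := by positivity
            have hj2 : ((j:ℝ)+2) ≠ 0 := by positivity
            rw [show 1/((j:ℝ)+1) - 1/((j:ℝ)+1+1) = 1/(((j:ℝ)+1)*((j:ℝ)+2)) by
              rw [div_sub_div _ _ hj1 (by positivity : ((j:ℝ)+1+1) ≠ 0)]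
              norm_num
              left; ring]
            rw [mul_one_div]
          rw [hsum, tele]
          have hk1 : (0:ℝ) < 1/((k:ℝ)+1) := by positivity
          nlinarith [sq_nonneg u]
  exact (main k).1.trans hbk

lemma summable_poly_geo (m : ℕ) {r : ℝ} (hr : |r| < 1) :
    Summable fun n : ℕ => ((n:ℝ)+1)^m * r^n := by
  have hr' : ‖r‖ < 1 := by rwa [Real.norm_eq_abs]
  have h : ∀ n : ℕ, ((n:ℝ)+1)^m * r^n
      = ∑ i ∈ Finset.range (m+1), ((m.choose i):ℝ) * ((n:ℝ)^i * r^n) := by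
    intro n
    rw [add_pow, Finset.sum_mul]
    apply Finset.sum_congr rfl
    intro i _
    rw [one_pow]
    ring
  refine Summable.congr (summable_sum (fun i _ =>
    (summable_pow_mul_geometric_of_norm_lt_one i hr').mul_left ((m.choose i):ℝ)))
    (fun n => (h n).symm)

lemma summable_master {C x : ℝ} (hx : |x| < 1) (c : ℕ → ℝ)
    (hc : ∀ k, |c k| ≤ C * ((k:ℝ)+1)^2) : Summable fun k => |c k * x ^ k| := by
  refine Summable.of_nonneg_of_le (fun k => abs_nonneg _) (fun k => ?_)
    ((summable_poly_geo 2 (by rwa [abs_abs] : |(|x|)| < 1)).mul_left C)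
  rw [abs_mul, abs_pow, ← mul_assoc]
  exact mul_le_mul_of_nonneg_right (hc k) (pow_nonneg (abs_nonneg x) k)

lemma deriv_bound {C : ℝ} (hC0 : 0 ≤ C) (c : ℕ → ℝ)
    (hc : ∀ k, |c k| ≤ C * ((k:ℝ)+1)^2) {s : ℝ} (hs0 : 0 < s) (n : ℕ) {y : ℝ}
    (hy : |y| ≤ s) : |c n| * (|((n:ℕ):ℝ)| * |y|^(n-1)) ≤ (C/s) * (((n:ℝ)+1)^3 * s^n) := by
  cases n with
  | zero => simp [div_nonneg hC0 hs0.le]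
  | succ m =>
    have h1 : |c (m+1)| ≤ C * ((m:ℝ)+2)^2 := by
      have := hc (m+1); push_cast at this ⊢; linarith
    have h2 : |((m+1:ℕ):ℝ)| = (m:ℝ)+1 := by
      rw [abs_of_nonneg (by positivity)]; push_cast; ring
    have h3 : |y| ^ (m+1-1) ≤ s ^ m := by
      simpa using pow_le_pow_left₀ (abs_nonneg y) hy m
    have h4 : |c (m+1)| * (|((m+1:ℕ):ℝ)| * |y|^(m+1-1))
        ≤ (C * ((m:ℝ)+2)^2) * (((m:ℝ)+1) * s^m) := by
      apply mul_le_mul h1 _ (by positivity) (by positivity)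
      rw [h2]
      exact mul_le_mul_of_nonneg_left h3 (by positivity)
    refine h4.trans ?_
    rw [div_mul_eq_mul_div, le_div_iff₀ hs0, pow_succ s m]
    have P : 0 ≤ C * s^m * s * ((m:ℝ)+2)^2 := by positivity
    push_cast
    nlinarith [P]

lemma hasDerivAt_psum {r : ℝ} (hr0 : 0 < r) (hr1 : r < 1) {x : ℝ} (hx : x ∈ Metric.ball (0:ℝ) r)
    (c : ℕ → ℝ) (C : ℝ) (hc : ∀ k, |c k| ≤ C * ((k:ℝ)+1)^2) :
    HasDerivAt (fun y => ∑' k : ℕ, c k * y^k) (∑' k : ℕ, ((k:ℝ)+1) * c (k+1) * x^k) x := by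
  have hC0 : 0 ≤ C := by
    have := (abs_nonneg (c 0)).trans (hc 0)
    simpa using this
  have hrabs : |r| < 1 := by rwa [abs_of_pos hr0]
  have hu : Summable fun n : ℕ => (C/r) * (((n:ℝ)+1)^3 * r^n) :=
    (summable_poly_geo 3 hrabs).mul_left _
  have key : HasDerivAt (fun y => ∑' k, c k * y^k)
      (∑' n, c n * ((n:ℝ) * x^(n-1))) x := by
    apply hasDerivAt_tsum_of_isPreconnected hu Metric.isOpen_ball
      (convex_ball (0:ℝ) r).isPreconnected
      (g := fun n y => c n * y^n) (g' := fun n y => c n * ((n:ℝ) * y^(n-1)))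
      (y₀ := 0) ?_ ?_ (Metric.mem_ball_self hr0) ?_ hx
    · intro n y _
      exact (hasDerivAt_pow n y).const_mul (c n)
    · intro n y hy
      have hyr : |y| < r := by rwa [Metric.mem_ball, dist_zero_right, Real.norm_eq_abs] at hy
      rw [Real.norm_eq_abs, abs_mul, abs_mul, abs_pow]
      exact deriv_bound hC0 c hc hr0 n hyr.le
    · exact Summable.of_abs (summable_master (by norm_num : |(0:ℝ)| < 1) c hc)
  have hxr : |x| < r := by rwa [Metric.mem_ball, dist_zero_right, Real.norm_eq_abs] at hx
  have hs : Summable fun n => c n * ((n:ℝ) * x^(n-1)) := by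
    refine Summable.of_norm (Summable.of_nonneg_of_le (fun k => norm_nonneg _) (fun n => ?_) hu)
    rw [Real.norm_eq_abs, abs_mul, abs_mul, abs_pow]
    exact deriv_bound hC0 c hc hr0 n hxr.le
  rw [Summable.tsum_eq_zero_add hs] at key
  simp only [Nat.cast_zero, zero_mul, mul_zero, zero_add] at key
  have hre : (∑' (b:ℕ), c (b+1) * (((b+1:ℕ):ℝ) * x^(b+1-1)))
      = ∑' k:ℕ, ((k:ℝ)+1) * c (k+1) * x^k :=
    tsum_congr fun k => by push_cast [Nat.add_sub_cancel]; ring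
  rw [hre] at key
  exact key

def C0 (u : ℝ) : ℝ := (max 1 |u|) * Real.exp (u^2)

lemma C0_nonneg (u : ℝ) : 0 ≤ C0 u := (abs_nonneg _).trans (aCoef_abs_le u 0)

lemma aCoef_abs_le' (u : ℝ) (k : ℕ) : |aCoef u k| ≤ C0 u := aCoef_abs_le u k

lemma one_le_sq (k : ℕ) : (1:ℝ) ≤ ((k:ℝ)+1)^2 := by nlinarith [(by positivity : (0:ℝ) ≤ (k:ℝ))]

lemma bound0 (u : ℝ) (k : ℕ) : |aCoef u k| ≤ C0 u * ((k:ℝ)+1)^2 := by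
  refine (aCoef_abs_le' u k).trans ?_
  nlinarith [C0_nonneg u, one_le_sq k]

lemma bound1 (u : ℝ) (k : ℕ) :
    |(((k:ℝ)+1) * aCoef u (k+1))| ≤ C0 u * ((k:ℝ)+1)^2 := by
  rw [abs_mul, abs_of_nonneg (by positivity : (0:ℝ) ≤ (k:ℝ)+1)]
  have h := aCoef_abs_le' u (k+1)
  have hk : (0:ℝ) ≤ (k:ℝ)+1 := by positivity
  nlinarith [mul_le_mul_of_nonneg_left h hk,
    mul_nonneg (mul_nonneg (C0_nonneg u) (by positivity : (0:ℝ) ≤ (k:ℝ))) hk]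

lemma bound2 (u : ℝ) (k : ℕ) :
    |((((k:ℝ)+1)*((k:ℝ)+2)) * aCoef u (k+2))| ≤ (2 * C0 u) * ((k:ℝ)+1)^2 := by
  rw [abs_mul, abs_of_nonneg (by positivity : (0:ℝ) ≤ ((k:ℝ)+1)*((k:ℝ)+2))]
  have h := aCoef_abs_le' u (k+2)
  have hk : (0:ℝ) ≤ (k:ℝ) := by positivity
  nlinarith [mul_le_mul_of_nonneg_left h (by positivity : (0:ℝ) ≤ ((k:ℝ)+1)*((k:ℝ)+2)),
    mul_nonneg (mul_nonneg (C0_nonneg u) hk) (by positivity : (0:ℝ) ≤ (k:ℝ)+1)]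

lemma boundq (u : ℝ) (k : ℕ) :
    |((k:ℝ)^2 * aCoef u k)| ≤ C0 u * ((k:ℝ)+1)^2 := by
  rw [abs_mul, abs_of_nonneg (by positivity : (0:ℝ) ≤ (k:ℝ)^2)]
  have h := aCoef_abs_le' u k
  have hk : (0:ℝ) ≤ (k:ℝ) := by positivity
  nlinarith [C0_nonneg u, abs_nonneg (aCoef u k)]

lemma boundw (u x : ℝ) (hx : |x| ≤ 1) (k : ℕ) :
    |(((k:ℝ)*((k:ℝ)+1)) * aCoef u (k+1)) * x| ≤ (2 * C0 u) * ((k:ℝ)+1)^2 := by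
  rw [abs_mul, abs_mul, abs_of_nonneg (by positivity : (0:ℝ) ≤ (k:ℝ)*((k:ℝ)+1))]
  have h := aCoef_abs_le' u (k+1)
  have hk : (0:ℝ) ≤ (k:ℝ) := by positivity
  nlinarith [C0_nonneg u, abs_nonneg (aCoef u (k+1)), abs_nonneg x, one_le_sq k,
    mul_nonneg (mul_nonneg hk (by positivity : (0:ℝ) ≤ (k:ℝ)+1)) (abs_nonneg (aCoef u (k+1)))]

def fF (u y : ℝ) : ℝ := ∑' k : ℕ, aCoef u k * y^k
def fF1 (u y : ℝ) : ℝ := ∑' k : ℕ, (((k:ℝ)+1) * aCoef u (k+1)) * y^k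
def fF2 (u y : ℝ) : ℝ := ∑' k : ℕ, ((((k:ℝ)+1)*((k:ℝ)+2)) * aCoef u (k+2)) * y^k

lemma ode (u x : ℝ) (hx : |x| < 1) :
    x * fF1 u x + (1+x^2) * fF2 u x = u^2 * fF u x := by
  have S0 : Summable fun k:ℕ => aCoef u k * x^k :=
    (summable_master hx _ (bound0 u)).of_abs
  have S1 : Summable fun k:ℕ => (((k:ℝ)+1) * aCoef u (k+1)) * x^k :=
    (summable_master hx _ (bound1 u)).of_abs
  have S2 : Summable fun k:ℕ => ((((k:ℝ)+1)*((k:ℝ)+2)) * aCoef u (k+2)) * x^k :=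
    (summable_master hx _ (bound2 u)).of_abs
  have Sq : Summable fun k:ℕ => ((k:ℝ)^2 * aCoef u k) * x^k :=
    (summable_master hx _ (boundq u)).of_abs
  have Sw : Summable fun k:ℕ => ((((k:ℝ)*((k:ℝ)+1)) * aCoef u (k+1)) * x) * x^k :=
    (summable_master hx _ (boundw u x hx.le)).of_abs
  have Sx1 : Summable fun k:ℕ => (((k:ℝ)+1) * aCoef u (k+1)) * x^(k+1) := by
    refine (S1.mul_right x).congr fun k => ?_
    rw [pow_succ]; ring
  -- Step A
  have recterm : ∀ k:ℕ, ((((k:ℝ)+1)*((k:ℝ)+2)) * aCoef u (k+2)) * x^k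
      = u^2 * (aCoef u k * x^k) - ((k:ℝ)^2 * aCoef u k) * x^k := by
    intro k
    have h := aCoef_rec u k
    have : (((k:ℝ)+1)*((k:ℝ)+2)) * aCoef u (k+2) = (u^2 - (k:ℝ)^2) * aCoef u k := h
    rw [this]; ring
  have A : fF2 u x = u^2 * fF u x - ∑' k:ℕ, ((k:ℝ)^2 * aCoef u k) * x^k := by
    unfold fF2 fF
    calc (∑' k:ℕ, ((((k:ℝ)+1)*((k:ℝ)+2)) * aCoef u (k+2)) * x^k)
        = ∑' k:ℕ, (u^2 * (aCoef u k * x^k) - ((k:ℝ)^2 * aCoef u k) * x^k) :=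
          tsum_congr recterm
      _ = (∑' k:ℕ, u^2 * (aCoef u k * x^k)) - ∑' k:ℕ, ((k:ℝ)^2 * aCoef u k) * x^k :=
          Summable.tsum_sub (S0.mul_left _) Sq
      _ = u^2 * (∑' k:ℕ, aCoef u k * x^k) - ∑' k:ℕ, ((k:ℝ)^2 * aCoef u k) * x^k := by
          rw [tsum_mul_left]
  -- Step B
  have hsplit : ∀ k:ℕ, (((k+1:ℕ):ℝ)^2 * aCoef u (k+1)) * x^(k+1)
      = (((k:ℝ)+1) * aCoef u (k+1)) * x^(k+1)
        + ((((k:ℝ)*((k:ℝ)+1)) * aCoef u (k+1)) * x) * x^k := by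
    intro k; push_cast; rw [pow_succ]; ring
  have B : x * fF1 u x + x^2 * fF2 u x = ∑' k:ℕ, ((k:ℝ)^2 * aCoef u k) * x^k := by
    rw [Summable.tsum_eq_zero_add Sq]
    simp only [Nat.cast_zero, Nat.cast_add, Nat.cast_one]
    rw [show ((0:ℝ)^2 * aCoef u 0) * x^0 = 0 by ring, zero_add]
    calc x * fF1 u x + x^2 * fF2 u x
        = (∑' k:ℕ, (((k:ℝ)+1) * aCoef u (k+1)) * x^(k+1))
          + ∑' k:ℕ, ((((k:ℝ)*((k:ℝ)+1)) * aCoef u (k+1)) * x) * x^k := by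
          congr 1
          · unfold fF1
            rw [← tsum_mul_left]
            exact tsum_congr fun k => by rw [pow_succ]; ring
          · -- x^2 * fF2 = ∑' w, via shifting w
            rw [Summable.tsum_eq_zero_add Sw]
            rw [show ((((0:ℕ):ℝ)*(((0:ℕ):ℝ)+1)) * aCoef u (0+1)) * x * x^(0:ℕ) = 0 by
              simp, zero_add]
            unfold fF2
            rw [← tsum_mul_left]
            exact tsum_congr fun k => by push_cast; rw [pow_succ, pow_succ]; ring
      _ = ∑' k:ℕ, ((((k:ℝ)+1) * aCoef u (k+1)) * x^(k+1)
            + ((((k:ℝ)*((k:ℝ)+1)) * aCoef u (k+1)) * x) * x^k) := (Summable.tsum_add Sx1 Sw).symm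
      _ = ∑' k:ℕ, (((k:ℝ)+1)^2 * aCoef u (k+1)) * x^(k+1) := by
          refine tsum_congr fun k => ?_
          have := hsplit k
          push_cast at this
          linarith [this]
  linarith [A, B]

def GG (u y : ℝ) : ℝ := Real.exp (u * Real.log (Real.sqrt (1+y^2) + y))

lemma sqrt1_pos (y : ℝ) : 0 < Real.sqrt (1+y^2) := Real.sqrt_pos.mpr (by positivity)

lemma sqrt_add_pos (y : ℝ) : 0 < Real.sqrt (1+y^2) + y := by
  have h1 : |y| < Real.sqrt (1+y^2) := by
    rw [show |y| = Real.sqrt (y^2) by rw [Real.sqrt_sq_eq_abs]]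
    exact Real.sqrt_lt_sqrt (sq_nonneg y) (by linarith)
  linarith [neg_abs_le y]

lemma GG_pos (u y : ℝ) : 0 < GG u y := Real.exp_pos _

lemma hasDerivAt_sqrt1 (y : ℝ) :
    HasDerivAt (fun x : ℝ => Real.sqrt (1+x^2)) (y / Real.sqrt (1+y^2)) y := by
  have h0 : (1:ℝ) + y^2 ≠ 0 := by positivity
  have hsq := sqrt1_pos y
  have h1 : HasDerivAt (fun x : ℝ => 1 + x^2) (2*y) y := by
    simpa using ((hasDerivAt_pow 2 y).const_add 1)
  have := (Real.hasDerivAt_sqrt h0).comp y h1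
  refine this.congr_deriv ?_
  field_simp

lemma hasDerivAt_GG (u y : ℝ) :
    HasDerivAt (GG u) (u / Real.sqrt (1+y^2) * GG u y) y := by
  have hsq := sqrt1_pos y
  have hsa := sqrt_add_pos y
  have h3 : HasDerivAt (fun x : ℝ => Real.sqrt (1+x^2) + x)
      (y / Real.sqrt (1+y^2) + 1) y := (hasDerivAt_sqrt1 y).add (hasDerivAt_id y)
  have h5 := ((h3.log (ne_of_gt hsa)).const_mul u).exp
  have harg : (y / Real.sqrt (1+y^2) + 1) / (Real.sqrt (1+y^2) + y)
      = 1 / Real.sqrt (1+y^2) := by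
    field_simp
    ring
  refine h5.congr_deriv ?_
  unfold GG
  rw [harg]
  ring

lemma fF_zero (u : ℝ) : fF u 0 = 1 := by
  unfold fF
  rw [tsum_eq_single 0 (fun k hk => by
    cases k with
    | zero => exact absurd rfl hk
    | succ m => simp)]
  simp [aCoef_zero]

lemma fF1_zero (u : ℝ) : fF1 u 0 = u := by
  unfold fF1
  rw [tsum_eq_single 0 (fun k hk => by
    cases k with
    | zero => exact absurd rfl hk
    | succ m => simp)]
  simp [aCoef_one]

lemma GG_zero (u : ℝ) : GG u 0 = 1 := by
  unfold GG
  norm_num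

lemma fF_eq_GG (u : ℝ) {r : ℝ} (hr0 : 0 < r) (hr1 : r < 1) :
    ∀ x ∈ Metric.ball (0:ℝ) r, fF u x = GG u x := by
  have hmem : ∀ x ∈ Metric.ball (0:ℝ) r, |x| < r := fun x hx => by
    rwa [Metric.mem_ball, dist_zero_right, Real.norm_eq_abs] at hx
  have hD : ∀ x ∈ Metric.ball (0:ℝ) r, HasDerivAt (fF u) (fF1 u x) x := by
    intro x hx
    exact hasDerivAt_psum hr0 hr1 hx (aCoef u) (C0 u) (bound0 u)
  have hD1 : ∀ x ∈ Metric.ball (0:ℝ) r, HasDerivAt (fF1 u) (fF2 u x) x := by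
    intro x hx
    have h := hasDerivAt_psum hr0 hr1 hx
      (fun k => ((k:ℝ)+1) * aCoef u (k+1)) (C0 u) (bound1 u)
    refine h.congr_deriv ?_
    unfold fF2
    exact (tsum_congr fun k => by push_cast; ring)
  set P : ℝ → ℝ := fun x => Real.sqrt (1+x^2) * fF1 u x - u * fF u x with hPdef
  have hP : ∀ x ∈ Metric.ball (0:ℝ) r, HasDerivAt P
      (x / Real.sqrt (1+x^2) * fF1 u x + Real.sqrt (1+x^2) * fF2 u x - u * fF1 u x) x := by
    intro x hx
    exact ((hasDerivAt_sqrt1 x).mul (hD1 x hx)).sub ((hD x hx).const_mul u)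
  have hQ : ∀ x ∈ Metric.ball (0:ℝ) r, HasDerivAt (fun z => P z * GG u z) 0 x := by
    intro x hx
    have h := (hP x hx).mul (hasDerivAt_GG u x)
    have hsq := sqrt1_pos x
    have hode := ode u x ((hmem x hx).trans hr1)
    have hss : Real.sqrt (1+x^2) * Real.sqrt (1+x^2) = 1+x^2 :=
      Real.mul_self_sqrt (by positivity)
    have key : x / Real.sqrt (1+x^2) * fF1 u x + Real.sqrt (1+x^2) * fF2 u x - u * fF1 u x
        = - (u / Real.sqrt (1+x^2)) * P x := by
      rw [hPdef]
      field_simp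
      linear_combination hode + fF2 u x * hss
    rw [key] at h
    refine h.congr_deriv ?_
    ring
  have h0mem : (0:ℝ) ∈ Metric.ball (0:ℝ) r := Metric.mem_ball_self hr0
  have hconst : ∀ (F : ℝ → ℝ), (∀ x ∈ Metric.ball (0:ℝ) r, HasDerivAt F 0 x) →
      ∀ x ∈ Metric.ball (0:ℝ) r, F x = F 0 := by
    intro F hF x hx
    have := (convex_ball (0:ℝ) r).norm_image_sub_le_of_norm_hasDerivWithin_le
      (f' := fun _ => (0:ℝ)) (C := 0) (fun y hy => (hF y hy).hasDerivWithinAt)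
      (fun y _ => by simp) h0mem hx
    simp only [zero_mul, norm_le_zero_iff, sub_eq_zero] at this
    exact this
  have hP0 : P 0 = 0 := by
    rw [hPdef]
    simp only [fF_zero, fF1_zero]
    norm_num
  have hPzero : ∀ x ∈ Metric.ball (0:ℝ) r, P x = 0 := by
    intro x hx
    have := hconst _ hQ x hx
    rw [hP0, zero_mul] at this
    exact (mul_eq_zero.mp this).resolve_right (ne_of_gt (GG_pos u x))
  have hR : ∀ x ∈ Metric.ball (0:ℝ) r, HasDerivAt (fun z => fF u z / GG u z) 0 x := by
    intro x hx
    have h := (hD x hx).div (hasDerivAt_GG u x) (ne_of_gt (GG_pos u x))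
    have hp : Real.sqrt (1+x^2) * fF1 u x - u * fF u x = 0 := hPzero x hx
    have hsq := sqrt1_pos x
    have hG := GG_pos u x
    refine h.congr_deriv ?_
    rw [show fF1 u x * GG u x - fF u x * (u / Real.sqrt (1+x^2) * GG u x)
        = (GG u x / Real.sqrt (1+x^2)) * (Real.sqrt (1+x^2) * fF1 u x - u * fF u x) by
      field_simp]
    rw [hp]
    simp
  intro x hx
  have := hconst _ hR x hx
  rw [fF_zero, GG_zero] at this
  norm_num at this
  rw [div_eq_one_iff_eq (ne_of_gt (GG_pos u x))] at this
  exact this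

/-- generating function of the `g_k`: for every `u ∈ ℝ` and `ζ ∈ ℝ` with
`|ζ| < 1`, the series `Σ_k g_k(u) (2ζ)^k` converges absolutely, with sum
`(√(1+ζ²) + ζ)^u = exp (u · log (√(1+ζ²) + ζ))`. -/
theorem g_generating_function (u ζ : ℝ) (hζ : |ζ| < 1) :
    (Summable fun k : ℕ => |(g k).eval u * (2 * ζ) ^ k|)
    ∧ HasSum (fun k : ℕ => (g k).eval u * (2 * ζ) ^ k)
        (Real.exp (u * Real.log (Real.sqrt (1 + ζ ^ 2) + ζ))) := by
  have hterm : ∀ k:ℕ, (g k).eval u * (2 * ζ)^k = aCoef u k * ζ^k := by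
    intro k
    rw [aCoef, mul_pow]
    ring
  constructor
  · exact (summable_master hζ (aCoef u) (bound0 u)).congr
      fun k => congrArg abs (hterm k).symm
  · set r := (1+|ζ|)/2 with hrdef
    have hr0 : 0 < r := by positivity
    have hr1 : r < 1 := by rw [hrdef]; linarith
    have hζr : ζ ∈ Metric.ball (0:ℝ) r := by
      rw [Metric.mem_ball, dist_zero_right, Real.norm_eq_abs, hrdef]
      linarith [abs_nonneg ζ]
    have heq := fF_eq_GG u hr0 hr1 ζ hζr
    have hsum : HasSum (fun k:ℕ => aCoef u k * ζ^k) (fF u ζ) :=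
      ((summable_master hζ _ (bound0 u)).of_abs).hasSum
    rw [heq] at hsum
    rw [show (fun k:ℕ => (g k).eval u * (2*ζ)^k) = fun k:ℕ => aCoef u k * ζ^k from
      funext hterm]
    exact hsum

end
end
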